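/- arXiv:1510.08158 — 3 statements merged into one kernel-verified Lean document; each statement's English description precedes it below -/
import Mathlib

section
/- If a periodic wave in 𝒲 satisfies u_x < 0 at every point of Ω⁺ ∪ S⁺, then the maximum of |v/u| over the closure of Ω is strictly less than 1. -/
open Set

/-- Partial derivative in the horizontal direction. -/
noncomputable def pdX (f : ℝ × ℝ → ℝ) (p : ℝ × ℝ) : ℝ := fderiv ℝ f p (1, 0)

/-- Partial derivative in the vertical direction. -/
noncomputable def pdY (f : ℝ × ℝ → ℝ) (p : ℝ × ℝ) : ℝ := fderiv ℝ f p (0, 1)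

/-- A symmetric `2L`-periodic steady gravity water wave with vorticity, in the frame
moving with the wave.  The fluid occupies `Ω = {(x,y) : -L < x < L, -d < y < η x}`;
`u, v` are the relative velocity components, `P` is the pressure, `η` the surface
profile, `ψ` the stream function and `γ` the vorticity function. -/
structure PeriodicWave (g Patm L : ℝ) : Type where
  u : ℝ × ℝ → ℝ
  v : ℝ × ℝ → ℝ
  P : ℝ × ℝ → ℝ
  η : ℝ → ℝ
  ψ : ℝ × ℝ → ℝ
  γ : ℝ → ℝ
  d : ℝ
  m : ℝ
  d_pos : 0 < d
  m_pos : 0 < m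
  u_smooth : ContDiff ℝ 3 u
  v_smooth : ContDiff ℝ 3 v
  P_smooth : ContDiff ℝ 3 P
  η_smooth : ContDiff ℝ 4 η
  ψ_smooth : ContDiff ℝ 4 ψ
  γ_smooth : ContDiffOn ℝ 2 γ (Icc 0 m)
  u_periodic : ∀ x y, u (x + 2 * L, y) = u (x, y)
  v_periodic : ∀ x y, v (x + 2 * L, y) = v (x, y)
  P_periodic : ∀ x y, P (x + 2 * L, y) = P (x, y)
  η_periodic : ∀ x, η (x + 2 * L) = η x
  η_mean : (∫ x in (-L)..L, η x) = 0
  u_even : ∀ x y, u (-x, y) = u (x, y)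
  v_odd : ∀ x y, v (-x, y) = -v (x, y)
  P_even : ∀ x y, P (-x, y) = P (x, y)
  η_even : ∀ x, η (-x) = η x
  euler_x : ∀ x y, -d < y → y < η x →
    u (x, y) * pdX u (x, y) + v (x, y) * pdY u (x, y) = -pdX P (x, y)
  euler_y : ∀ x y, -d < y → y < η x →
    u (x, y) * pdX v (x, y) + v (x, y) * pdY v (x, y) = -(pdY P (x, y)) - g
  incompressible : ∀ x y, -d < y → y < η x → pdX u (x, y) + pdY v (x, y) = 0
  surface_pressure : ∀ x, P (x, η x) = Patm
  surface_kinematic : ∀ x, v (x, η x) = deriv η x * u (x, η x)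
  bed_kinematic : ∀ x, v (x, -d) = 0
  nonstagnant : ∃ δ > 0, ∀ x y, -d ≤ y → y ≤ η x → u (x, y) ≤ -δ
  psi_x : ∀ x y, -d ≤ y → y ≤ η x → pdX ψ (x, y) = -v (x, y)
  psi_y : ∀ x y, -d ≤ y → y ≤ η x → pdY ψ (x, y) = u (x, y)
  psi_surface : ∀ x, ψ (x, η x) = 0
  psi_bed : ∀ x, ψ (x, -d) = m
  vorticity_eq : ∀ x y, -d < y → y < η x → pdX v (x, y) - pdY u (x, y) = γ (ψ (x, y))

namespace PeriodicWave

variable {g Patm L : ℝ}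

/-- The closure of one period `Ω` of the fluid domain. -/
def Ωbar (W : PeriodicWave g Patm L) : Set (ℝ × ℝ) :=
  {p | -L ≤ p.1 ∧ p.1 ≤ L ∧ -W.d ≤ p.2 ∧ p.2 ≤ W.η p.1}

/-- The open half period `Ω⁺` of the fluid domain. -/
def Ωplus (W : PeriodicWave g Patm L) : Set (ℝ × ℝ) :=
  {p | 0 < p.1 ∧ p.1 < L ∧ -W.d < p.2 ∧ p.2 < W.η p.1}

/-- The half period `S⁺` of the free surface. -/
def Splus (W : PeriodicWave g Patm L) : Set (ℝ × ℝ) :=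
  {p | 0 < p.1 ∧ p.1 < L ∧ p.2 = W.η p.1}

/-- A wave is trivial if `u, v, P, η` depend only on `y`. -/
def IsTrivial (W : PeriodicWave g Patm L) : Prop :=
  (∀ p, W.v p = 0) ∧ (∀ x, W.η x = 0) ∧
    (∀ x x' y, W.u (x, y) = W.u (x', y)) ∧ (∀ x x' y, W.P (x, y) = W.P (x', y))

/-- The streamline monotonicity condition `v > 0` on `Ω⁺ ∪ S⁺`. -/
def MonotoneHalf (W : PeriodicWave g Patm L) : Prop :=
  ∀ p ∈ W.Ωplus ∪ W.Splus, 0 < W.v p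

/-- Membership in the water-wave set 𝒲 : the vorticity function satisfies
`γ ≤ 0`, `γ' ≤ 0`, `γ'' ≤ 0` on `[0, m]`, and the wave is either trivial or
monotone. -/
def MemW (W : PeriodicWave g Patm L) : Prop :=
  (∀ s ∈ Icc (0:ℝ) W.m, W.γ s ≤ 0) ∧
  (∀ s ∈ Icc (0:ℝ) W.m, derivWithin W.γ (Icc 0 W.m) s ≤ 0) ∧
  (∀ s ∈ Icc (0:ℝ) W.m, derivWithin (derivWithin W.γ (Icc 0 W.m)) (Icc 0 W.m) s ≤ 0) ∧
  (W.IsTrivial ∨ W.MonotoneHalf)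

/-- The trace of `(u, v, u_x, v_x, u_y, u_xx, u_xy)` on the free surface. -/
noncomputable def trace (W : PeriodicWave g Patm L) (x : ℝ) :
    ℝ × ℝ × ℝ × ℝ × ℝ × ℝ × ℝ :=
  (W.u (x, W.η x), W.v (x, W.η x), pdX W.u (x, W.η x), pdX W.v (x, W.η x),
    pdY W.u (x, W.η x), pdX (pdX W.u) (x, W.η x), pdY (pdX W.u) (x, W.η x))

end PeriodicWave


open Filter Topology

section Toolkit

lemma contDiff_pdX {f : ℝ × ℝ → ℝ} {m n : WithTop ℕ∞} (hf : ContDiff ℝ n f) (h : m + 1 ≤ n) :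
    ContDiff ℝ m (pdX f) :=
  (ContinuousLinearMap.apply ℝ ℝ ((1:ℝ),(0:ℝ))).contDiff.comp (hf.fderiv_right h)

lemma contDiff_pdY {f : ℝ × ℝ → ℝ} {m n : WithTop ℕ∞} (hf : ContDiff ℝ n f) (h : m + 1 ≤ n) :
    ContDiff ℝ m (pdY f) :=
  (ContinuousLinearMap.apply ℝ ℝ ((0:ℝ),(1:ℝ))).contDiff.comp (hf.fderiv_right h)

lemma fderiv_apply_split {f : ℝ × ℝ → ℝ} (p : ℝ × ℝ) (a b : ℝ) :
    fderiv ℝ f p (a, b) = a * pdX f p + b * pdY f p := by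
  have h : ((a, b) : ℝ × ℝ) = a • ((1:ℝ),(0:ℝ)) + b • ((0:ℝ),(1:ℝ)) := by
    simp [Prod.ext_iff]
  rw [h, map_add, map_smul, map_smul]
  simp [pdX, pdY, smul_eq_mul]

/-- Derivative of `t ↦ f (t, η t)`. -/
lemma hasDerivAt_along {f : ℝ × ℝ → ℝ} {η : ℝ → ℝ} {x s : ℝ}
    (hf : DifferentiableAt ℝ f (x, η x)) (hη : HasDerivAt η s x) :
    HasDerivAt (fun t => f (t, η t)) (pdX f (x, η x) + s * pdY f (x, η x)) x := by
  have h1 : HasDerivAt (fun t : ℝ => (t, η t)) ((1:ℝ), s) x :=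
    (hasDerivAt_id x).prodMk hη
  have h2 := hf.hasFDerivAt.comp_hasDerivAt x h1
  have h3 : fderiv ℝ f (x, η x) (1, s) = pdX f (x, η x) + s * pdY f (x, η x) := by
    rw [fderiv_apply_split]; ring
  rw [h3] at h2
  exact h2

/-- Derivative of a vertical slice. -/
lemma hasDerivAt_sliceY {f : ℝ × ℝ → ℝ} {x y : ℝ} (hf : DifferentiableAt ℝ f (x, y)) :
    HasDerivAt (fun t => f (x, t)) (pdY f (x, y)) y := by
  have h1 : HasDerivAt (fun t : ℝ => (x, t)) ((0:ℝ), (1:ℝ)) y :=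
    (hasDerivAt_const y x).prodMk (hasDerivAt_id y)
  exact hf.hasFDerivAt.comp_hasDerivAt y h1

/-- 1D second derivative test at a local maximum. -/
lemma secondDeriv_nonpos_of_isLocalMax {φ : ℝ → ℝ} {a : ℝ}
    (hφ : ContDiff ℝ 2 φ) (hmax : IsLocalMax φ a) :
    deriv (deriv φ) a ≤ 0 := by
  by_contra hpos
  push_neg at hpos
  have h21 : (2 : WithTop ℕ∞) = 1 + 1 := by norm_num
  rw [h21] at hφ
  have hd1 : ContDiff ℝ 1 (deriv φ) := (contDiff_succ_iff_deriv.mp hφ).2.2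
  have hcont : Continuous (deriv (deriv φ)) := hd1.continuous_deriv le_rfl
  have hev : ∀ᶠ t in 𝓝 a, 0 < deriv (deriv φ) t :=
    (hcont.tendsto a).eventually (eventually_gt_nhds hpos)
  obtain ⟨r, hr, hball⟩ := Metric.eventually_nhds_iff_ball.mp (hev.and hmax)
  set b := a + r / 2 with hb
  have hab : a < b := by simp only [hb]; linarith
  have hsub : Icc a b ⊆ Metric.ball a r := by
    intro t ht
    simp only [Metric.mem_ball, Real.dist_eq, abs_lt]
    obtain ⟨h1, h2⟩ := ht
    constructor <;> simp only [hb] at h2 <;> linarith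
  have hd0 : deriv φ a = 0 := hmax.deriv_eq_zero
  have hmono : StrictMonoOn (deriv φ) (Icc a b) := by
    apply strictMonoOn_of_deriv_pos (convex_Icc _ _) (hd1.continuous.continuousOn)
    intro t ht
    rw [interior_Icc] at ht
    exact (hball _ (hsub (Ioo_subset_Icc_self ht))).1
  have hderiv_pos : ∀ t ∈ Ioo a b, 0 < deriv φ t := by
    intro t ht
    have := hmono (left_mem_Icc.mpr hab.le) (Ioo_subset_Icc_self ht) ht.1
    rwa [hd0] at this
  have hφmono : StrictMonoOn φ (Icc a b) := by
    apply strictMonoOn_of_deriv_pos (convex_Icc _ _)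
      ((hφ.continuous).continuousOn)
    intro t ht
    rw [interior_Icc] at ht
    exact hderiv_pos t ht
  have hlt : φ a < φ b := hφmono (left_mem_Icc.mpr hab.le) (right_mem_Icc.mpr hab.le) hab
  have : φ b ≤ φ a := (hball b (hsub (right_mem_Icc.mpr hab.le))).2
  linarith

/-- 2D directional second derivative test at a local maximum. -/
lemma pd2_nonpos_of_isLocalMax {h : ℝ × ℝ → ℝ} {q : ℝ × ℝ}
    (hsm : ContDiff ℝ 2 h) (hmax : IsLocalMax h q) (c : ℝ × ℝ) :
    fderiv ℝ (fun p => fderiv ℝ h p c) q c ≤ 0 := by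
  set line : ℝ → ℝ × ℝ := fun t => q + t • c with hline
  have hline_cd : ContDiff ℝ ⊤ line := contDiff_const.add (contDiff_id.smul contDiff_const)
  have hline_deriv : ∀ t, HasDerivAt line c t := by
    intro t
    have : HasDerivAt (fun t : ℝ => t • c) ((1:ℝ) • c) t := (hasDerivAt_id t).smul_const c
    have := this.const_add q; rw [one_smul] at this; exact this
  set φ : ℝ → ℝ := fun t => h (line t) with hφdef
  have hφ : ContDiff ℝ 2 φ := hsm.comp (hline_cd.of_le le_top)
  have hline0 : line 0 = q := by simp [hline]
  have hmaxφ : IsLocalMax φ 0 := by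
    have htend : Filter.Tendsto line (𝓝 0) (𝓝 q) := by
      rw [← hline0]; exact (hline_cd.continuous).continuousAt
    have h2 := htend.eventually hmax
    show ∀ᶠ t in 𝓝 0, φ t ≤ φ 0
    simpa only [hφdef, hline0] using h2
  have hdiff : Differentiable ℝ h := hsm.differentiable (by norm_num)
  have hderφ : deriv φ = fun t => fderiv ℝ h (line t) c := by
    funext t
    exact (((hdiff (line t)).hasFDerivAt).comp_hasDerivAt t (hline_deriv t)).deriv
  have hpd : Differentiable ℝ (fun p => fderiv ℝ h p c) := by
    have : ContDiff ℝ 1 (fun p => fderiv ℝ h p c) :=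
      (ContinuousLinearMap.apply ℝ ℝ c).contDiff.comp (hsm.fderiv_right (by norm_num))
    exact this.differentiable (by norm_num)
  have hder2 : deriv (deriv φ) 0 = fderiv ℝ (fun p => fderiv ℝ h p c) q c := by
    rw [hderφ]
    have := ((hpd (line 0)).hasFDerivAt).comp_hasDerivAt 0 (hline_deriv 0)
    rw [hline0] at this
    exact this.deriv
  have := secondDeriv_nonpos_of_isLocalMax hφ hmaxφ
  rwa [hder2] at this

end Toolkit

section Symm

/-- Symmetry of mixed partial derivatives for C² functions. -/
lemma pdXY_comm {f : ℝ × ℝ → ℝ} (hf : ContDiff ℝ 2 f) (q : ℝ × ℝ) :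
    pdX (pdY f) q = pdY (pdX f) q := by
  have hdiff : ∀ p, HasFDerivAt f (fderiv ℝ f p) p := fun p =>
    ((hf.differentiable (by norm_num)) p).hasFDerivAt
  have hf' : HasFDerivAt (fderiv ℝ f) (fderiv ℝ (fderiv ℝ f) q) q :=
    (((hf.fderiv_right (by norm_num : (1:WithTop ℕ∞) + 1 ≤ 2)).differentiable (by norm_num)) q).hasFDerivAt
  have hsym := second_derivative_symmetric hdiff hf'
  have e1 : HasFDerivAt (fun p => fderiv ℝ f p ((0:ℝ),(1:ℝ)))
      ((ContinuousLinearMap.apply ℝ ℝ ((0:ℝ),(1:ℝ))).comp (fderiv ℝ (fderiv ℝ f) q)) q :=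
    (ContinuousLinearMap.apply ℝ ℝ ((0:ℝ),(1:ℝ))).hasFDerivAt.comp q hf'
  have e2 : HasFDerivAt (fun p => fderiv ℝ f p ((1:ℝ),(0:ℝ)))
      ((ContinuousLinearMap.apply ℝ ℝ ((1:ℝ),(0:ℝ))).comp (fderiv ℝ (fderiv ℝ f) q)) q :=
    (ContinuousLinearMap.apply ℝ ℝ ((1:ℝ),(0:ℝ))).hasFDerivAt.comp q hf'
  have h1 : pdX (pdY f) q = (fderiv ℝ (fderiv ℝ f) q ((1:ℝ),(0:ℝ))) ((0:ℝ),(1:ℝ)) := by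
    show fderiv ℝ (fun p => fderiv ℝ f p ((0:ℝ),(1:ℝ))) q ((1:ℝ),(0:ℝ)) = _
    rw [e1.fderiv]; rfl
  have h2 : pdY (pdX f) q = (fderiv ℝ (fderiv ℝ f) q ((0:ℝ),(1:ℝ))) ((1:ℝ),(0:ℝ)) := by
    show fderiv ℝ (fun p => fderiv ℝ f p ((1:ℝ),(0:ℝ))) q ((0:ℝ),(1:ℝ)) = _
    rw [e2.fderiv]; rfl
  rw [h1, h2, hsym]

end Symm


section WaveLemmas

variable {g Patm L : ℝ}


section ExpAux

/-- The comparison function `e^{α y}`. -/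
noncomputable def expY (α : ℝ) : ℝ × ℝ → ℝ := fun p => Real.exp (α * p.2)

lemma expY_pos (α : ℝ) (p : ℝ × ℝ) : 0 < expY α p := Real.exp_pos _

lemma contDiff_expY (α : ℝ) {n : WithTop ℕ∞} : ContDiff ℝ n (expY α) :=
  (Real.contDiff_exp.of_le le_top).comp (contDiff_const.mul contDiff_snd)

lemma expY_hasFDerivAt (α : ℝ) (p : ℝ × ℝ) :
    HasFDerivAt (expY α) ((α * Real.exp (α * p.2)) • ContinuousLinearMap.snd ℝ ℝ ℝ) p := by
  have hin : HasFDerivAt (fun q : ℝ × ℝ => α * q.2) (α • ContinuousLinearMap.snd ℝ ℝ ℝ) p := by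
    have h2 := ((ContinuousLinearMap.snd ℝ ℝ ℝ).hasFDerivAt (x := p)).const_smul α
    exact h2
  have hout := (Real.hasDerivAt_exp (α * p.2)).comp_hasFDerivAt p hin
  have heq : (α * Real.exp (α * p.2)) • ContinuousLinearMap.snd ℝ ℝ ℝ
      = Real.exp (α * p.2) • α • ContinuousLinearMap.snd ℝ ℝ ℝ := by
    rw [smul_smul, mul_comm]
  rw [heq]
  exact hout

lemma expY_diff (α : ℝ) : Differentiable ℝ (expY α) :=
  fun p => (expY_hasFDerivAt α p).differentiableAt

lemma pdX_expY (α : ℝ) : pdX (expY α) = fun _ => 0 := by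
  funext p
  show fderiv ℝ (expY α) p ((1:ℝ),(0:ℝ)) = 0
  rw [(expY_hasFDerivAt α p).fderiv]
  simp

lemma pdY_expY (α : ℝ) : pdY (expY α) = fun p => α * expY α p := by
  funext p
  show fderiv ℝ (expY α) p ((0:ℝ),(1:ℝ)) = _
  rw [(expY_hasFDerivAt α p).fderiv]
  simp [expY]

end ExpAux

/-- Pure algebra: contradiction at a nonnegative surface maximum of `u + v`. -/
lemma surface_algebra {g δ U V Ux Uy Vx Vy Px Py s γ₀ : ℝ} (hg : 0 < g) (hδ : 0 < δ)
    (hUδ : U ≤ -δ) (hUx : Ux < 0) (hkin : V = s * U) (hinc : Ux + Vy = 0)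
    (hvort : Vx - Uy = γ₀) (hγ₀ : γ₀ ≤ 0) (hex : U * Ux + V * Uy + Px = 0)
    (hey : U * Vx + V * Vy + Py + g = 0) (hP : Px + s * Py = 0)
    (htan : (Ux + s * Uy) + (Vx + s * Vy) = 0) (hM : 0 ≤ U + V) : False := by
  have hUneg : U < 0 := by linarith
  have hVU : -U ≤ V := by linarith
  have hVpos : 0 < V := by linarith
  have key1 : U * Px + V * Py = 0 := by linear_combination U * hP + Py * hkin
  have key2 : Ux * (V^2 - U^2) - U * V * (Uy + Vx) - g * V = 0 := by
    linear_combination key1 - U * hex - V * hey + V^2 * hinc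
  have hV2 : U^2 ≤ V^2 := by nlinarith
  have key3 : 0 < Uy + Vx := by
    by_contra hc
    push_neg at hc
    have h1 : 0 ≤ U * V * (Uy + Vx) := by
      nlinarith [mul_nonneg (neg_nonneg.mpr (show U * V ≤ 0 by nlinarith))
        (neg_nonneg.mpr hc)]
    have h2 : Ux * (V^2 - U^2) ≤ 0 := by
      nlinarith [mul_nonneg (neg_nonneg.mpr hUx.le) (sub_nonneg.mpr hV2)]
    nlinarith [mul_pos hg hVpos]
  have key4 : 0 < Uy := by linarith
  have key5 : s ≤ -1 := by
    by_contra hc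
    push_neg at hc
    have := mul_neg_of_pos_of_neg (show 0 < s + 1 by linarith) hUneg
    nlinarith
  have key6 : 0 < Uy - Ux := by linarith
  have htan2 : Ux + Vx + s * (Uy - Ux) = 0 := by linear_combination htan - s * hinc
  have step : Uy - Ux ≤ (-s) * (Uy - Ux) :=
    le_mul_of_one_le_left key6.le (by linarith : (1:ℝ) ≤ -s)
  nlinarith

namespace PeriodicWave

lemma u_diff (W : PeriodicWave g Patm L) : Differentiable ℝ W.u :=
  W.u_smooth.differentiable (by norm_num)

lemma v_diff (W : PeriodicWave g Patm L) : Differentiable ℝ W.v :=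
  W.v_smooth.differentiable (by norm_num)

lemma P_diff (W : PeriodicWave g Patm L) : Differentiable ℝ W.P :=
  W.P_smooth.differentiable (by norm_num)

lemma ψ_diff (W : PeriodicWave g Patm L) : Differentiable ℝ W.ψ :=
  W.ψ_smooth.differentiable (by norm_num)

lemma η_diff (W : PeriodicWave g Patm L) : Differentiable ℝ W.η :=
  W.η_smooth.differentiable (by norm_num)

/-- The surface never touches the bed. -/
lemma eta_ne (W : PeriodicWave g Patm L) (x : ℝ) : W.η x ≠ -W.d := by
  intro h
  have h1 := W.psi_surface x
  have h2 := W.psi_bed x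
  rw [h] at h1
  rw [h1] at h2
  exact absurd h2.symm (ne_of_gt W.m_pos)

/-- Some point of the surface is above the bed. -/
lemma eta_exists_nonneg (W : PeriodicWave g Patm L) (hL : 0 < L) :
    ∃ x₀, 0 ≤ W.η x₀ := by
  by_contra hc
  push_neg at hc
  have hint : (0:ℝ) < ∫ x in (-L)..L, -W.η x := by
    apply intervalIntegral.intervalIntegral_pos_of_pos_on
    · exact (W.η_smooth.continuous.neg).intervalIntegrable _ _
    · intro x _; linarith [hc x]
    · linarith
  rw [intervalIntegral.integral_neg, W.η_mean] at hint
  simp at hint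

/-- The surface is everywhere strictly above the bed. -/
lemma eta_gt (W : PeriodicWave g Patm L) (hL : 0 < L) (x : ℝ) : -W.d < W.η x := by
  obtain ⟨x₀, hx₀⟩ := W.eta_exists_nonneg hL
  rcases lt_or_ge (-W.d) (W.η x) with h | h
  · exact h
  exfalso
  have hlt : W.η x < -W.d := lt_of_le_of_ne h (W.eta_ne x)
  have hcont : ContinuousOn (fun t => W.η t + W.d) (uIcc x x₀) :=
    (W.η_smooth.continuous.add continuous_const).continuousOn
  have hmem : (0:ℝ) ∈ uIcc (W.η x + W.d) (W.η x₀ + W.d) := by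
    rw [mem_uIcc]
    left
    constructor <;> [linarith; linarith [W.d_pos]]
  obtain ⟨t, _, ht⟩ := intermediate_value_uIcc hcont hmem
  have ht' : W.η t + W.d = 0 := ht
  exact W.eta_ne t (by linarith)

/-- `v` vanishes on the crest line `x = 0`. -/
lemma v_zero_crest (W : PeriodicWave g Patm L) (y : ℝ) : W.v (0, y) = 0 := by
  have := W.v_odd 0 y
  simp only [neg_zero] at this
  linarith

/-- `v` vanishes on the trough line `x = L`. -/
lemma v_zero_trough (W : PeriodicWave g Patm L) (y : ℝ) : W.v (L, y) = 0 := by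
  have h1 := W.v_periodic (-L) y
  have h2 := W.v_odd L y
  have h3 : -L + 2 * L = L := by ring
  rw [h3] at h1
  linarith

/-- The stream function is strictly decreasing on vertical fluid segments. -/
lemma psi_strictAnti (W : PeriodicWave g Patm L) (x : ℝ) :
    StrictAntiOn (fun y => W.ψ (x, y)) (Icc (-W.d) (W.η x)) := by
  obtain ⟨δ, hδ, hu⟩ := W.nonstagnant
  apply strictAntiOn_of_deriv_neg (convex_Icc _ _)
  · exact (W.ψ_smooth.continuous.comp (continuous_const.prodMk continuous_id)).continuousOn
  · intro y hy
    rw [interior_Icc] at hy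
    have hD : HasDerivAt (fun y => W.ψ (x, y)) (pdY W.ψ (x, y)) y :=
      hasDerivAt_sliceY ((W.ψ_diff) (x, y))
    rw [hD.deriv, W.psi_y x y hy.1.le hy.2.le]
    linarith [hu x y hy.1.le hy.2.le]

/-- Bounds for the stream function in the fluid domain. -/
lemma psi_mem_Icc (W : PeriodicWave g Patm L) (hL : 0 < L) {x y : ℝ}
    (h1 : -W.d ≤ y) (h2 : y ≤ W.η x) : W.ψ (x, y) ∈ Icc 0 W.m := by
  have hd := W.eta_gt hL x
  have hmono := W.psi_strictAnti x
  have hs := W.psi_surface x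
  have hb := W.psi_bed x
  constructor
  · rcases eq_or_lt_of_le h2 with h | h
    · rw [h, hs]
    · have := hmono ⟨h1, h2⟩ ⟨hd.le, le_rfl⟩ h
      simp only [hs] at this
      linarith
  · rcases eq_or_lt_of_le h1 with h | h
    · rw [← h, hb]
    · have := hmono ⟨le_rfl, hd.le⟩ ⟨h1, h2⟩ h
      simp only [hb] at this
      linarith

/-- Strict bounds for the stream function in the open fluid domain. -/
lemma psi_mem_Ioo (W : PeriodicWave g Patm L) (hL : 0 < L) {x y : ℝ}
    (h1 : -W.d < y) (h2 : y < W.η x) : W.ψ (x, y) ∈ Ioo 0 W.m := by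
  have hd := W.eta_gt hL x
  have hmono := W.psi_strictAnti x
  have hs := W.psi_surface x
  have hb := W.psi_bed x
  constructor
  · have := hmono ⟨h1.le, h2.le⟩ ⟨hd.le, le_rfl⟩ h2
    simp only [hs] at this
    linarith
  · have := hmono ⟨le_rfl, hd.le⟩ ⟨h1.le, h2.le⟩ h1
    simp only [hb] at this
    linarith

/-- Limits of interior identities extend to the free surface. -/
lemma surface_limit (W : PeriodicWave g Patm L) (hL : 0 < L) (x : ℝ) {F : ℝ × ℝ → ℝ}
    (hF : Continuous F) (h0 : ∀ y, -W.d < y → y < W.η x → F (x, y) = 0) :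
    F (x, W.η x) = 0 := by
  have hd := W.eta_gt hL x
  have ht : Tendsto (fun y => F (x, y)) (𝓝[<] (W.η x)) (𝓝 (F (x, W.η x))) :=
    ((hF.comp (continuous_const.prodMk continuous_id)).tendsto _).mono_left nhdsWithin_le_nhds
  have he : (fun y => F (x, y)) =ᶠ[𝓝[<] (W.η x)] (fun _ => 0) := by
    filter_upwards [Ioo_mem_nhdsLT hd] with y hy
    exact h0 y hy.1 hy.2
  exact tendsto_nhds_unique (ht.congr' he) tendsto_const_nhds

lemma cont_pdX_u (W : PeriodicWave g Patm L) : Continuous (pdX W.u) :=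
  (contDiff_pdX (m := 0) W.u_smooth (by norm_num)).continuous
lemma cont_pdY_u (W : PeriodicWave g Patm L) : Continuous (pdY W.u) :=
  (contDiff_pdY (m := 0) W.u_smooth (by norm_num)).continuous
lemma cont_pdX_v (W : PeriodicWave g Patm L) : Continuous (pdX W.v) :=
  (contDiff_pdX (m := 0) W.v_smooth (by norm_num)).continuous
lemma cont_pdY_v (W : PeriodicWave g Patm L) : Continuous (pdY W.v) :=
  (contDiff_pdY (m := 0) W.v_smooth (by norm_num)).continuous
lemma cont_pdX_P (W : PeriodicWave g Patm L) : Continuous (pdX W.P) :=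
  (contDiff_pdX (m := 0) W.P_smooth (by norm_num)).continuous
lemma cont_pdY_P (W : PeriodicWave g Patm L) : Continuous (pdY W.P) :=
  (contDiff_pdY (m := 0) W.P_smooth (by norm_num)).continuous

/-- Incompressibility holds on the free surface. -/
lemma incompressible_surface (W : PeriodicWave g Patm L) (hL : 0 < L) (x : ℝ) :
    pdX W.u (x, W.η x) + pdY W.v (x, W.η x) = 0 :=
  W.surface_limit hL x (W.cont_pdX_u.add W.cont_pdY_v)
    (fun y h1 h2 => W.incompressible x y h1 h2)

/-- The first Euler equation holds on the free surface. -/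
lemma euler_x_surface (W : PeriodicWave g Patm L) (hL : 0 < L) (x : ℝ) :
    W.u (x, W.η x) * pdX W.u (x, W.η x) + W.v (x, W.η x) * pdY W.u (x, W.η x)
      + pdX W.P (x, W.η x) = 0 := by
  have := W.surface_limit hL x (F := fun p => W.u p * pdX W.u p + W.v p * pdY W.u p + pdX W.P p)
    (((W.u_smooth.continuous.mul W.cont_pdX_u).add
        (W.v_smooth.continuous.mul W.cont_pdY_u)).add W.cont_pdX_P)
    (fun y h1 h2 => by have := W.euler_x x y h1 h2; linarith)
  exact this

/-- The second Euler equation holds on the free surface. -/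
lemma euler_y_surface (W : PeriodicWave g Patm L) (hL : 0 < L) (x : ℝ) :
    W.u (x, W.η x) * pdX W.v (x, W.η x) + W.v (x, W.η x) * pdY W.v (x, W.η x)
      + pdY W.P (x, W.η x) + g = 0 := by
  have := W.surface_limit hL x
    (F := fun p => W.u p * pdX W.v p + W.v p * pdY W.v p + pdY W.P p + g)
    ((((W.u_smooth.continuous.mul W.cont_pdX_v).add
        (W.v_smooth.continuous.mul W.cont_pdY_v)).add W.cont_pdY_P).add continuous_const)
    (fun y h1 h2 => by have := W.euler_y x y h1 h2; linarith)
  exact this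

/-- The vorticity equation holds on the free surface, where `ψ = 0`. -/
lemma vorticity_surface (W : PeriodicWave g Patm L) (hL : 0 < L) (x : ℝ) :
    pdX W.v (x, W.η x) - pdY W.u (x, W.η x) = W.γ 0 := by
  have hd := W.eta_gt hL x
  have ht : Tendsto (fun y => pdX W.v (x, y) - pdY W.u (x, y)) (𝓝[<] (W.η x))
      (𝓝 (pdX W.v (x, W.η x) - pdY W.u (x, W.η x))) :=
    (((W.cont_pdX_v.sub W.cont_pdY_u).comp
      (continuous_const.prodMk continuous_id)).tendsto _).mono_left nhdsWithin_le_nhds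
  have hψt : Tendsto (fun y => W.ψ (x, y)) (𝓝[<] (W.η x)) (𝓝[Icc 0 W.m] 0) := by
    apply tendsto_nhdsWithin_of_tendsto_nhds_of_eventually_within
    · have : Tendsto (fun y => W.ψ (x, y)) (𝓝 (W.η x)) (𝓝 (W.ψ (x, W.η x))) :=
        (W.ψ_smooth.continuous.comp (continuous_const.prodMk continuous_id)).tendsto _
      rw [W.psi_surface x] at this
      exact this.mono_left nhdsWithin_le_nhds
    · filter_upwards [Ioo_mem_nhdsLT hd] with y hy
      exact W.psi_mem_Icc hL hy.1.le hy.2.le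
  have hγc : ContinuousWithinAt W.γ (Icc 0 W.m) 0 :=
    (W.γ_smooth.continuousOn) 0 (left_mem_Icc.mpr W.m_pos.le)
  have hγt : Tendsto (fun y => W.γ (W.ψ (x, y))) (𝓝[<] (W.η x)) (𝓝 (W.γ 0)) :=
    hγc.tendsto.comp hψt
  have he : (fun y => pdX W.v (x, y) - pdY W.u (x, y)) =ᶠ[𝓝[<] (W.η x)]
      (fun y => W.γ (W.ψ (x, y))) := by
    filter_upwards [Ioo_mem_nhdsLT hd] with y hy
    exact W.vorticity_eq x y hy.1 hy.2
  exact tendsto_nhds_unique (ht.congr' he) hγt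

/-- Differentiated surface pressure condition. -/
lemma surface_P_deriv (W : PeriodicWave g Patm L) (x : ℝ) :
    pdX W.P (x, W.η x) + deriv W.η x * pdY W.P (x, W.η x) = 0 := by
  have hd : HasDerivAt (fun t => W.P (t, W.η t))
      (pdX W.P (x, W.η x) + deriv W.η x * pdY W.P (x, W.η x)) x :=
    hasDerivAt_along (W.P_diff _) ((W.η_diff x).hasDerivAt)
  have hconst : (fun t => W.P (t, W.η t)) = fun _ => Patm := funext W.surface_pressure
  rw [hconst] at hd
  exact hd.unique (hasDerivAt_const _ _)

/-- No point of the open upper surface can be a maximum point of `u + v`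
with nonnegative maximum value. -/
lemma no_surface_max (W : PeriodicWave g Patm L) (hg : 0 < g) (hL : 0 < L)
    (hγ0 : W.γ 0 ≤ 0)
    (hux : ∀ p ∈ W.Ωplus ∪ W.Splus, pdX W.u p < 0)
    {x₀ : ℝ} (hx1 : 0 < x₀) (hx2 : x₀ < L)
    (hM : 0 ≤ W.u (x₀, W.η x₀) + W.v (x₀, W.η x₀))
    (hmax : IsLocalMax (fun x => W.u (x, W.η x) + W.v (x, W.η x)) x₀) : False := by
  obtain ⟨δ, hδ, hu⟩ := W.nonstagnant
  have hUδ : W.u (x₀, W.η x₀) ≤ -δ := hu x₀ (W.η x₀) (W.eta_gt hL x₀).le le_rfl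
  have hUxneg : pdX W.u (x₀, W.η x₀) < 0 := hux (x₀, W.η x₀) (Or.inr ⟨hx1, hx2, rfl⟩)
  have hkin : W.v (x₀, W.η x₀) = deriv W.η x₀ * W.u (x₀, W.η x₀) := W.surface_kinematic x₀
  have hinc : pdX W.u (x₀, W.η x₀) + pdY W.v (x₀, W.η x₀) = 0 := W.incompressible_surface hL x₀
  have hvort : pdX W.v (x₀, W.η x₀) - pdY W.u (x₀, W.η x₀) = W.γ 0 := W.vorticity_surface hL x₀
  have hex := W.euler_x_surface hL x₀
  have hey := W.euler_y_surface (g := g) hL x₀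
  have hP := W.surface_P_deriv x₀
  have hηd : HasDerivAt W.η (deriv W.η x₀) x₀ := (W.η_diff x₀).hasDerivAt
  have hdu : HasDerivAt (fun t => W.u (t, W.η t))
      (pdX W.u (x₀, W.η x₀) + deriv W.η x₀ * pdY W.u (x₀, W.η x₀)) x₀ :=
    hasDerivAt_along (W.u_diff _) hηd
  have hdv : HasDerivAt (fun t => W.v (t, W.η t))
      (pdX W.v (x₀, W.η x₀) + deriv W.η x₀ * pdY W.v (x₀, W.η x₀)) x₀ :=
    hasDerivAt_along (W.v_diff _) hηd
  have htan := hmax.hasDerivAt_eq_zero (hdu.add hdv)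
  exact surface_algebra hg hδ hUδ hUxneg hkin hinc hvort hγ0 hex hey hP htan hM

lemma diff_pdX_u (W : PeriodicWave g Patm L) : Differentiable ℝ (pdX W.u) :=
  (contDiff_pdX (m := 2) W.u_smooth (by norm_num)).differentiable (by norm_num)
lemma diff_pdY_u (W : PeriodicWave g Patm L) : Differentiable ℝ (pdY W.u) :=
  (contDiff_pdY (m := 2) W.u_smooth (by norm_num)).differentiable (by norm_num)
lemma diff_pdX_v (W : PeriodicWave g Patm L) : Differentiable ℝ (pdX W.v) :=
  (contDiff_pdX (m := 2) W.v_smooth (by norm_num)).differentiable (by norm_num)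
lemma diff_pdY_v (W : PeriodicWave g Patm L) : Differentiable ℝ (pdY W.v) :=
  (contDiff_pdY (m := 2) W.v_smooth (by norm_num)).differentiable (by norm_num)

/-- The open fluid domain (full period strip). -/
lemma isOpen_strip (W : PeriodicWave g Patm L) :
    IsOpen {p : ℝ × ℝ | -W.d < p.2 ∧ p.2 < W.η p.1} :=
  (isOpen_lt continuous_const continuous_snd).and
    (isOpen_lt continuous_snd (W.η_smooth.continuous.comp continuous_fst))

/-- Interior Laplacian identities for `u` and `v`. -/
lemma lap_uv (W : PeriodicWave g Patm L) (hL : 0 < L) {q : ℝ × ℝ}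
    (hq1 : -W.d < q.2) (hq2 : q.2 < W.η q.1) :
    pdX (pdX W.u) q + pdY (pdY W.u) q = -(deriv W.γ (W.ψ q)) * W.u q ∧
    pdX (pdX W.v) q + pdY (pdY W.v) q = -(deriv W.γ (W.ψ q)) * W.v q := by
  have hqΩ : q ∈ {p : ℝ × ℝ | -W.d < p.2 ∧ p.2 < W.η p.1} := ⟨hq1, hq2⟩
  have hnhds := W.isOpen_strip.mem_nhds hqΩ
  -- incompressibility near q
  have hA : (fun p => pdX W.u p + pdY W.v p) =ᶠ[𝓝 q] (fun _ => (0:ℝ)) := by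
    filter_upwards [hnhds] with p hp
    simpa using W.incompressible p.1 p.2 hp.1 hp.2
  have hdA : fderiv ℝ (fun p => pdX W.u p + pdY W.v p) q = 0 := by
    rw [hA.fderiv_eq]; exact fderiv_const_apply 0
  have hsplitA : fderiv ℝ (fun p => pdX W.u p + pdY W.v p) q
      = fderiv ℝ (pdX W.u) q + fderiv ℝ (pdY W.v) q :=
    fderiv_add (W.diff_pdX_u q) (W.diff_pdY_v q)
  have eincX : pdX (pdX W.u) q + pdX (pdY W.v) q = 0 := by
    have := congrFun (congrArg DFunLike.coe (hsplitA.symm.trans hdA)) ((1:ℝ), (0:ℝ))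
    simpa [pdX] using this
  have eincY : pdY (pdX W.u) q + pdY (pdY W.v) q = 0 := by
    have := congrFun (congrArg DFunLike.coe (hsplitA.symm.trans hdA)) ((0:ℝ), (1:ℝ))
    simpa [pdY] using this
  -- vorticity near q
  have hψq : W.ψ q ∈ Ioo 0 W.m := by
    have := W.psi_mem_Ioo hL hq1 hq2
    simpa using this
  have hγat : ContDiffAt ℝ 2 W.γ (W.ψ q) :=
    W.γ_smooth.contDiffAt (Icc_mem_nhds hψq.1 hψq.2)
  have hγd : HasDerivAt W.γ (deriv W.γ (W.ψ q)) (W.ψ q) :=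
    ((hγat.differentiableAt (by norm_num))).hasDerivAt
  have hcomp : HasFDerivAt (fun p => W.γ (W.ψ p))
      (deriv W.γ (W.ψ q) • fderiv ℝ W.ψ q) q :=
    hγd.comp_hasFDerivAt q ((W.ψ_diff q).hasFDerivAt)
  have hB : (fun p => pdX W.v p - pdY W.u p - W.γ (W.ψ p)) =ᶠ[𝓝 q] (fun _ => (0:ℝ)) := by
    filter_upwards [hnhds] with p hp
    have := W.vorticity_eq p.1 p.2 hp.1 hp.2
    simp only [Prod.mk.eta] at this
    simp [this]
  have hdB : fderiv ℝ (fun p => pdX W.v p - pdY W.u p - W.γ (W.ψ p)) q = 0 := by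
    rw [hB.fderiv_eq]; exact fderiv_const_apply 0
  have hsplitB : fderiv ℝ (fun p => pdX W.v p - pdY W.u p - W.γ (W.ψ p)) q
      = fderiv ℝ (pdX W.v) q - fderiv ℝ (pdY W.u) q
        - deriv W.γ (W.ψ q) • fderiv ℝ W.ψ q := by
    rw [fderiv_fun_sub (((W.diff_pdX_v q)).fun_sub (W.diff_pdY_u q)) hcomp.differentiableAt,
      fderiv_fun_sub (W.diff_pdX_v q) (W.diff_pdY_u q), hcomp.fderiv]
  have hpsix : fderiv ℝ W.ψ q ((1:ℝ),(0:ℝ)) = -W.v q := by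
    have := W.psi_x q.1 q.2 hq1.le hq2.le
    simpa [pdX] using this
  have hpsiy : fderiv ℝ W.ψ q ((0:ℝ),(1:ℝ)) = W.u q := by
    have := W.psi_y q.1 q.2 hq1.le hq2.le
    simpa [pdY] using this
  have evortX : pdX (pdX W.v) q - pdX (pdY W.u) q - deriv W.γ (W.ψ q) * (-W.v q) = 0 := by
    have := congrFun (congrArg DFunLike.coe (hsplitB.symm.trans hdB)) ((1:ℝ), (0:ℝ))
    simpa [pdX, hpsix, smul_eq_mul] using this
  have evortY : pdY (pdX W.v) q - pdY (pdY W.u) q - deriv W.γ (W.ψ q) * (W.u q) = 0 := by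
    have := congrFun (congrArg DFunLike.coe (hsplitB.symm.trans hdB)) ((0:ℝ), (1:ℝ))
    simpa [pdY, hpsiy, smul_eq_mul] using this
  -- symmetry of mixed partials
  have hsymu : pdX (pdY W.u) q = pdY (pdX W.u) q :=
    pdXY_comm (W.u_smooth.of_le (by norm_num)) q
  have hsymv : pdX (pdY W.v) q = pdY (pdX W.v) q :=
    pdXY_comm (W.v_smooth.of_le (by norm_num)) q
  constructor
  · linarith [eincX, evortY, hsymv]
  · linarith [eincY, evortX, hsymu]

/-- No interior local maximum with nonnegative value for the perturbed function. -/
lemma no_interior_max (W : PeriodicWave g Patm L) (hL : 0 < L)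
    (hγ' : ∀ s ∈ Icc (0:ℝ) W.m, derivWithin W.γ (Icc 0 W.m) s ≤ 0)
    {α ε : ℝ} (hε : 0 < ε)
    (hα : ∀ s ∈ Icc (0:ℝ) W.m, -(derivWithin W.γ (Icc 0 W.m) s) < α ^ 2)
    {q : ℝ × ℝ} (hq1 : -W.d < q.2) (hq2 : q.2 < W.η q.1)
    (hmax : IsLocalMax (fun p => W.u p + W.v p + ε * expY α p) q)
    (hval : 0 ≤ W.u q + W.v q + ε * expY α q) : False := by
  set gfun : ℝ × ℝ → ℝ := fun p => W.u p + W.v p + ε * expY α p with hgdef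
  have hgsm : ContDiff ℝ 2 gfun :=
    ((W.u_smooth.of_le (by norm_num)).add (W.v_smooth.of_le (by norm_num))).add
      (contDiff_const.mul (contDiff_expY α))
  have hgd : ∀ p, HasFDerivAt gfun
      (fderiv ℝ W.u p + fderiv ℝ W.v p
        + ε • ((α * Real.exp (α * p.2)) • ContinuousLinearMap.snd ℝ ℝ ℝ)) p := by
    intro p
    exact ((W.u_diff p).hasFDerivAt.add ((W.v_diff p).hasFDerivAt)).add
      ((expY_hasFDerivAt α p).const_smul ε)
  have hfun1 : (fun p => fderiv ℝ gfun p ((1:ℝ),(0:ℝ)))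
      = fun p => pdX W.u p + pdX W.v p := by
    funext p
    rw [(hgd p).fderiv]
    simp [pdX]
  have hfun2 : (fun p => fderiv ℝ gfun p ((0:ℝ),(1:ℝ)))
      = fun p => pdY W.u p + pdY W.v p + (ε * α) * expY α p := by
    funext p
    rw [(hgd p).fderiv]
    simp [pdY, expY]
    ring
  have htest1 := pd2_nonpos_of_isLocalMax hgsm hmax ((1:ℝ),(0:ℝ))
  have htest2 := pd2_nonpos_of_isLocalMax hgsm hmax ((0:ℝ),(1:ℝ))
  rw [hfun1] at htest1
  rw [hfun2] at htest2
  have hs1 : fderiv ℝ (fun p => pdX W.u p + pdX W.v p) q ((1:ℝ),(0:ℝ))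
      = pdX (pdX W.u) q + pdX (pdX W.v) q := by
    rw [fderiv_fun_add (W.diff_pdX_u q) (W.diff_pdX_v q)]; rfl
  have hexpd : Differentiable ℝ (fun p => expY α p) := expY_diff α
  have hs2 : fderiv ℝ (fun p => pdY W.u p + pdY W.v p + (ε * α) * expY α p) q ((0:ℝ),(1:ℝ))
      = pdY (pdY W.u) q + pdY (pdY W.v) q + (ε * α) * (α * expY α q) := by
    rw [fderiv_fun_add ((W.diff_pdY_u q).fun_add (W.diff_pdY_v q))
        ((hexpd q).const_mul (ε * α)),
      fderiv_fun_add (W.diff_pdY_u q) (W.diff_pdY_v q),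
      fderiv_const_mul (hexpd q)]
    have heY : fderiv ℝ (expY α) q ((0:ℝ),(1:ℝ)) = α * expY α q := by
      rw [(expY_hasFDerivAt α q).fderiv]; simp [expY]
    simp only [ContinuousLinearMap.add_apply, ContinuousLinearMap.coe_smul',
      Pi.smul_apply, smul_eq_mul, heY]
    rfl
  rw [hs1] at htest1
  rw [hs2] at htest2
  obtain ⟨hlu, hlv⟩ := W.lap_uv hL hq1 hq2
  have hψq' : W.ψ q ∈ Ioo 0 W.m := by
    have := W.psi_mem_Ioo hL hq1 hq2
    simpa using this
  have hψq : W.ψ q ∈ Icc 0 W.m := Ioo_subset_Icc_self hψq'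
  have hderiv_eq : derivWithin W.γ (Icc 0 W.m) (W.ψ q) = deriv W.γ (W.ψ q) :=
    derivWithin_of_mem_nhds (Icc_mem_nhds hψq'.1 hψq'.2)
  have hA1 : deriv W.γ (W.ψ q) ≤ 0 := hderiv_eq ▸ hγ' _ hψq
  have hA2 : -(deriv W.γ (W.ψ q)) < α ^ 2 := hderiv_eq ▸ hα _ hψq
  have hE : 0 < expY α q := expY_pos α q
  nlinarith [mul_nonneg (neg_nonneg.mpr hA1) hval,
    mul_pos (mul_pos hε hE) (show 0 < α ^ 2 + deriv W.γ (W.ψ q) by linarith)]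

/-- `u + v < 0` on the closed right half period. -/
lemma uv_neg (W : PeriodicWave g Patm L) (hg : 0 < g) (hL : 0 < L)
    (hγ0 : W.γ 0 ≤ 0)
    (hγ' : ∀ s ∈ Icc (0:ℝ) W.m, derivWithin W.γ (Icc 0 W.m) s ≤ 0)
    (hux : ∀ p ∈ W.Ωplus ∪ W.Splus, pdX W.u p < 0) :
    ∀ p : ℝ × ℝ, 0 ≤ p.1 → p.1 ≤ L → -W.d ≤ p.2 → p.2 ≤ W.η p.1 →
      W.u p + W.v p < 0 := by
  obtain ⟨δ, hδ, hu⟩ := W.nonstagnant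
  set K : Set (ℝ × ℝ) := {p | 0 ≤ p.1 ∧ p.1 ≤ L ∧ -W.d ≤ p.2 ∧ p.2 ≤ W.η p.1} with hKdef
  -- compactness of K
  have hKcl : IsClosed K := by
    apply IsClosed.inter (isClosed_le continuous_const continuous_fst)
    apply IsClosed.inter (isClosed_le continuous_fst continuous_const)
    exact IsClosed.inter (isClosed_le continuous_const continuous_snd)
      (isClosed_le continuous_snd (W.η_smooth.continuous.comp continuous_fst))
  obtain ⟨ηM, hηM⟩ := (isCompact_Icc (a := (0:ℝ)) (b := L)).exists_bound_of_continuousOn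
    (W.η_smooth.continuous.continuousOn)
  have hKsub : K ⊆ Icc ((0:ℝ), -W.d) ((L : ℝ), ηM) := by
    rintro ⟨x, y⟩ ⟨h1, h2, h3, h4⟩
    have : W.η x ≤ ηM := le_trans (le_abs_self _) (hηM x ⟨h1, h2⟩)
    exact ⟨⟨h1, h3⟩, ⟨h2, le_trans h4 this⟩⟩
  have hKcp : IsCompact K := IsCompact.of_isClosed_subset isCompact_Icc hKcl hKsub
  have hbase : ((0:ℝ), -W.d) ∈ K := by
    refine ⟨le_rfl, hL.le, le_rfl, ?_⟩
    exact (W.eta_gt hL 0).le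
  -- the function f = u + v
  set f : ℝ × ℝ → ℝ := fun p => W.u p + W.v p with hfdef
  have hfc : Continuous f := W.u_smooth.continuous.add W.v_smooth.continuous
  obtain ⟨pstar, hpsK, hpsmax⟩ := hKcp.exists_isMaxOn ⟨_, hbase⟩ hfc.continuousOn
  -- suppose the maximum is nonnegative
  by_contra hcon
  push_neg at hcon
  obtain ⟨pbad, h1, h2, h3, h4, hbad⟩ := hcon
  have hM : 0 ≤ f pstar := le_trans hbad (hpsmax ⟨h1, h2, h3, h4⟩)
  -- choose α
  set γ' : ℝ → ℝ := derivWithin W.γ (Icc 0 W.m) with hγ'def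
  have hγ'cont : ContinuousOn γ' (Icc 0 W.m) :=
    (W.γ_smooth.derivWithin (uniqueDiffOn_Icc W.m_pos)
      (by norm_num : (1:WithTop ℕ∞) + 1 ≤ 2)).continuousOn
  obtain ⟨B, hB⟩ := isCompact_Icc.exists_bound_of_continuousOn hγ'cont
  have hB0 : 0 ≤ B := le_trans (norm_nonneg _) (hB 0 (left_mem_Icc.mpr W.m_pos.le))
  set α : ℝ := B + 1 with hαdef
  have hα : ∀ s ∈ Icc (0:ℝ) W.m, -(γ' s) < α ^ 2 := by
    intro s hs
    have := hB s hs
    rw [Real.norm_eq_abs] at this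
    have h1 := neg_abs_le (γ' s)
    nlinarith
  -- bound for expY on K
  obtain ⟨C, hC⟩ := hKcp.exists_bound_of_continuousOn
    ((Real.continuous_exp.comp (continuous_const.mul continuous_snd)).continuousOn
      (f := expY α))
  have hC0 : 0 < C := lt_of_lt_of_le (expY_pos α _) (le_trans (le_abs_self _) (hC _ hbase))
  -- best boundary point
  set S0 : Set (ℝ × ℝ) := K \ W.Ωplus with hS0def
  have hS0cl : IsClosed S0 := by
    have hopen : IsOpen W.Ωplus := by
      have : W.Ωplus = {p : ℝ × ℝ | 0 < p.1} ∩ {p | p.1 < L}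
          ∩ ({p : ℝ × ℝ | -W.d < p.2 ∧ p.2 < W.η p.1}) := by
        ext p
        simp only [Ωplus, mem_setOf_eq, mem_inter_iff]
        tauto
      rw [this]
      exact ((isOpen_lt continuous_const continuous_fst).inter
        (isOpen_lt continuous_fst continuous_const)).inter W.isOpen_strip
    exact hKcl.sdiff hopen
  have hS0cp : IsCompact S0 := IsCompact.of_isClosed_subset hKcp hS0cl diff_subset
  have hS0ne : ((0:ℝ), -W.d) ∈ S0 := ⟨hbase, fun hmem => lt_irrefl (0:ℝ) hmem.1⟩
  obtain ⟨p₀, hp₀S, hp₀max⟩ := hS0cp.exists_isMaxOn ⟨_, hS0ne⟩ hfc.continuousOn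
  -- the epsilon argument
  have hkey : ∀ ε : ℝ, 0 < ε → f pstar ≤ f p₀ + ε * C := by
    intro ε hε
    set gfun : ℝ × ℝ → ℝ := fun p => W.u p + W.v p + ε * expY α p with hgdef
    have hgc : Continuous gfun :=
      hfc.add (continuous_const.mul (Real.continuous_exp.comp
        (continuous_const.mul continuous_snd)))
    obtain ⟨qε, hqK, hqmax⟩ := hKcp.exists_isMaxOn ⟨_, hbase⟩ hgc.continuousOn
    have hval : 0 ≤ gfun qε := by
      have h1 : f pstar ≤ gfun pstar := by
        have := (expY_pos α pstar)
        simp only [hgdef, hfdef]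
        nlinarith
      exact le_trans hM (le_trans h1 (hqmax hpsK))
    have hqS0 : qε ∈ S0 := by
      refine ⟨hqK, fun hmem => ?_⟩
      have hlocal : IsLocalMax gfun qε := by
        have hopen : IsOpen W.Ωplus := by
          have : W.Ωplus = {p : ℝ × ℝ | 0 < p.1} ∩ {p | p.1 < L}
              ∩ ({p : ℝ × ℝ | -W.d < p.2 ∧ p.2 < W.η p.1}) := by
            ext p
            simp only [Ωplus, mem_setOf_eq, mem_inter_iff]
            tauto
          rw [this]
          exact ((isOpen_lt continuous_const continuous_fst).inter
            (isOpen_lt continuous_fst continuous_const)).inter W.isOpen_strip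
        filter_upwards [hopen.mem_nhds hmem] with p hp
        exact hqmax ⟨hp.1.le, hp.2.1.le, hp.2.2.1.le, hp.2.2.2.le⟩
      exact W.no_interior_max hL hγ' hε hα hmem.2.2.1 hmem.2.2.2 hlocal hval
    calc f pstar ≤ gfun pstar := by
          have := expY_pos α pstar
          simp only [hgdef, hfdef]
          nlinarith
      _ ≤ gfun qε := hqmax hpsK
      _ = f qε + ε * expY α qε := rfl
      _ ≤ f p₀ + ε * C := by
          have h1 : f qε ≤ f p₀ := hp₀max hqS0
          have h2 : expY α qε ≤ C := le_trans (le_abs_self _) (hC _ hqK)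
          nlinarith
  -- pass to the limit
  have hlim : f pstar ≤ f p₀ := by
    by_contra hlt
    push_neg at hlt
    have hεp : 0 < (f pstar - f p₀) / (2 * C) :=
      div_pos (by linarith) (by linarith)
    have hkey' := hkey _ hεp
    have h2C : (f pstar - f p₀) / (2 * C) * C = (f pstar - f p₀) / 2 := by
      field_simp
    rw [h2C] at hkey'
    clear_value f
    linarith
  have hp₀M : 0 ≤ f p₀ := le_trans hM hlim
  have hp₀K : ∀ p ∈ K, f p ≤ f p₀ := fun p hp => le_trans (hpsmax hp) hlim
  -- classify p₀
  obtain ⟨hp₀mem, hnotmem⟩ := hp₀S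
  obtain ⟨x₀, y₀⟩ := p₀
  obtain ⟨hx1, hx2, hy1, hy2⟩ := hp₀mem
  replace hx1 : 0 ≤ x₀ := hx1
  replace hx2 : x₀ ≤ L := hx2
  replace hy1 : -W.d ≤ y₀ := hy1
  replace hy2 : y₀ ≤ W.η x₀ := hy2
  replace hnotmem : ¬(0 < x₀ ∧ x₀ < L ∧ -W.d < y₀ ∧ y₀ < W.η x₀) := hnotmem
  simp only [not_and_or, not_lt] at hnotmem
  have hucase : W.v (x₀, y₀) = 0 → False := by
    intro hv
    have hule := hu x₀ y₀ hy1 hy2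
    have heq : f (x₀, y₀) = W.u (x₀, y₀) + W.v (x₀, y₀) := rfl
    have hneg : f (x₀, y₀) ≤ -δ := by rw [heq, hv]; linarith
    clear_value f
    linarith [hp₀M]
  rcases hnotmem with h | h | h | h
  · exact hucase (by rw [show x₀ = 0 from le_antisymm h hx1]; exact W.v_zero_crest y₀)
  · exact hucase (by rw [show x₀ = L from le_antisymm hx2 h]; exact W.v_zero_trough y₀)
  · exact hucase (by rw [show y₀ = -W.d from le_antisymm h hy1]; exact W.bed_kinematic x₀)
  · have hy0 : y₀ = W.η x₀ := le_antisymm hy2 h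
    subst hy0
    rcases eq_or_lt_of_le hx1 with hx0 | hx1'
    · exact hucase (by rw [show x₀ = (0:ℝ) from hx0.symm]; exact W.v_zero_crest _)
    rcases eq_or_lt_of_le hx2 with hx0 | hx2'
    · exact hucase (by rw [hx0]; exact W.v_zero_trough _)
    have hlm : IsLocalMax (fun x => W.u (x, W.η x) + W.v (x, W.η x)) x₀ := by
      filter_upwards [Ioo_mem_nhds hx1' hx2'] with x hx
      exact hp₀K (x, W.η x) ⟨hx.1.le, hx.2.le, (W.eta_gt hL x).le, le_rfl⟩
    exact W.no_surface_max hg hL hγ0 hux hx1' hx2' hp₀M hlm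

end PeriodicWave


end WaveLemmas

/-- **Lemma (slope bound from `u_x < 0`, periodic case).**  If a periodic wave in `𝒲`
satisfies `u_x < 0` everywhere on `Ω⁺ ∪ S⁺`, then the maximum of `|v/u|` over the closure
of `Ω` is strictly less than `1`. -/
theorem periodic_slope_max_lt_one (g Patm L : ℝ) (hg : 0 < g) (hL : 0 < L)
    (W : PeriodicWave g Patm L) (hMW : W.MemW)
    (hux : ∀ p ∈ W.Ωplus ∪ W.Splus, pdX W.u p < 0) :
    ∃ c < (1:ℝ), ∀ p ∈ W.Ωbar, |W.v p / W.u p| ≤ c := by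
  obtain ⟨hγ0all, hγ', _, htriv⟩ := hMW
  rcases htriv with htriv | hmono
  · -- trivial case: v ≡ 0
    refine ⟨0, one_pos, fun p _ => ?_⟩
    rw [htriv.1 p]
    simp
  · -- monotone case
    have hγ0 : W.γ 0 ≤ 0 := hγ0all 0 (left_mem_Icc.mpr W.m_pos.le)
    have huv := W.uv_neg hg hL hγ0 hγ' hux
    obtain ⟨δ, hδ, hu⟩ := W.nonstagnant
    -- v is nonnegative on the right half
    have hv0 : ∀ p : ℝ × ℝ, 0 ≤ p.1 → p.1 ≤ L → -W.d ≤ p.2 → p.2 ≤ W.η p.1 →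
        0 ≤ W.v p := by
      rintro ⟨x, y⟩ hx1 hx2 hy1 hy2
      replace hx1 : 0 ≤ x := hx1
      replace hx2 : x ≤ L := hx2
      replace hy1 : -W.d ≤ y := hy1
      replace hy2 : y ≤ W.η x := hy2
      rcases eq_or_lt_of_le hx1 with h | h
      · rw [← h]; exact (W.v_zero_crest y).ge
      rcases eq_or_lt_of_le hx2 with h2 | h2
      · rw [h2]; exact (W.v_zero_trough y).ge
      rcases eq_or_lt_of_le hy1 with h3 | h3
      · rw [← h3]; exact (W.bed_kinematic x).ge
      rcases eq_or_lt_of_le hy2 with h4 | h4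
      · exact (hmono (x, y) (Or.inr ⟨h, h2, h4⟩)).le
      · exact (hmono (x, y) (Or.inl ⟨h, h2, h3, h4⟩)).le
    -- compactness of the closed fluid domain
    have hcl : IsClosed W.Ωbar := by
      apply IsClosed.inter (isClosed_le continuous_const continuous_fst)
      apply IsClosed.inter (isClosed_le continuous_fst continuous_const)
      exact IsClosed.inter (isClosed_le continuous_const continuous_snd)
        (isClosed_le continuous_snd (W.η_smooth.continuous.comp continuous_fst))
    obtain ⟨ηM, hηM⟩ := (isCompact_Icc (a := (-L:ℝ)) (b := L)).exists_bound_of_continuousOn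
      (W.η_smooth.continuous.continuousOn)
    have hsub : W.Ωbar ⊆ Icc ((-L:ℝ), -W.d) ((L : ℝ), ηM) := by
      rintro ⟨x, y⟩ ⟨h1, h2, h3, h4⟩
      have : W.η x ≤ ηM := le_trans (le_abs_self _) (hηM x ⟨h1, h2⟩)
      exact ⟨⟨h1, h3⟩, ⟨h2, le_trans h4 this⟩⟩
    have hcp : IsCompact W.Ωbar := IsCompact.of_isClosed_subset isCompact_Icc hcl hsub
    have hne : ((0:ℝ), -W.d) ∈ W.Ωbar :=
      ⟨show -L ≤ (0:ℝ) by linarith, show (0:ℝ) ≤ L from hL.le, le_rfl,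
        show -W.d ≤ W.η 0 from (W.eta_gt hL 0).le⟩
    -- u is nonvanishing on Ωbar
    have hune : ∀ p ∈ W.Ωbar, W.u p ≠ 0 := by
      rintro ⟨x, y⟩ ⟨_, _, h3, h4⟩
      have := hu x y h3 h4
      intro h0
      rw [h0] at this
      linarith
    have hFc : ContinuousOn (fun p => |W.v p / W.u p|) W.Ωbar :=
      ((W.v_smooth.continuous.continuousOn.div
        W.u_smooth.continuous.continuousOn hune)).abs
    obtain ⟨pm, hpm, hpmax⟩ := hcp.exists_isMaxOn ⟨_, hne⟩ hFc
    refine ⟨|W.v pm / W.u pm|, ?_, fun p hp => hpmax hp⟩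
    -- reflect pm into the right half
    obtain ⟨hm1, hm2, hm3, hm4⟩ := hpm
    replace hm1 : -L ≤ pm.1 := hm1
    replace hm2 : pm.1 ≤ L := hm2
    replace hm3 : -W.d ≤ pm.2 := hm3
    replace hm4 : pm.2 ≤ W.η pm.1 := hm4
    have hηabs : W.η |pm.1| = W.η pm.1 := by
      rcases abs_cases pm.1 with ⟨h, _⟩ | ⟨h, _⟩
      · rw [h]
      · rw [h, W.η_even]
    have hq1 : (0:ℝ) ≤ |pm.1| := abs_nonneg _
    have hq2 : |pm.1| ≤ L := abs_le.mpr ⟨hm1, hm2⟩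
    have hq4 : pm.2 ≤ W.η |pm.1| := hηabs ▸ hm4
    have huq : W.u (|pm.1|, pm.2) ≤ -δ := hu _ _ hm3 hq4
    have hvq : 0 ≤ W.v (|pm.1|, pm.2) := hv0 _ hq1 hq2 hm3 hq4
    have hsum : W.u (|pm.1|, pm.2) + W.v (|pm.1|, pm.2) < 0 := huv _ hq1 hq2 hm3 hq4
    have hFq : |W.v (|pm.1|, pm.2) / W.u (|pm.1|, pm.2)| < 1 := by
      rw [abs_div, abs_of_nonneg hvq, abs_of_neg (show W.u (|pm.1|, pm.2) < 0 by linarith),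
        div_lt_one (by linarith)]
      linarith
    have hFeq : |W.v pm / W.u pm| = |W.v (|pm.1|, pm.2) / W.u (|pm.1|, pm.2)| := by
      rcases abs_cases pm.1 with ⟨h, _⟩ | ⟨h, _⟩
      · rw [h]
      · rw [h]
        have hv := W.v_odd pm.1 pm.2
        have hueq := W.u_even pm.1 pm.2
        rw [hv, hueq]
        rw [abs_div, abs_div, abs_neg]
    rw [hFeq]
    exact hFq
end

section
/- If a solitary wave in 𝒲 satisfies u_x < 0 at every point of Ω⁺ ∪ S⁺, then the supremum of |v/u| over the closure of Ω is strictly less than 1. -/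
open Set

/-- A symmetric steady solitary gravity water wave with vorticity, in the frame moving
with the wave.  The fluid occupies `Ω = {(x,y) : x ∈ ℝ, -d < y < η x}`; `u, v` are the
relative velocity components, `P` is the pressure, `η` the surface profile, `uInf` the
asymptotic horizontal velocity, `ψ` the stream function and `γ` the vorticity
function. -/
structure SolitaryWave (g Patm : ℝ) : Type where
  u : ℝ × ℝ → ℝ
  v : ℝ × ℝ → ℝ
  P : ℝ × ℝ → ℝ
  η : ℝ → ℝ
  uInf : ℝ → ℝ
  ψ : ℝ × ℝ → ℝ
  γ : ℝ → ℝ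
  d : ℝ
  m : ℝ
  d_pos : 0 < d
  m_pos : 0 < m
  u_smooth : ContDiff ℝ 3 u
  v_smooth : ContDiff ℝ 3 v
  P_smooth : ContDiff ℝ 3 P
  η_smooth : ContDiff ℝ 4 η
  uInf_smooth : ContDiff ℝ 3 uInf
  ψ_smooth : ContDiff ℝ 4 ψ
  γ_smooth : ContDiffOn ℝ 2 γ (Icc 0 m)
  u_bdd : ∀ k : ℕ, k ≤ 3 → ∃ C, ∀ p, ‖iteratedFDeriv ℝ k u p‖ ≤ C
  v_bdd : ∀ k : ℕ, k ≤ 3 → ∃ C, ∀ p, ‖iteratedFDeriv ℝ k v p‖ ≤ C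
  P_bdd : ∀ k : ℕ, k ≤ 3 → ∃ C, ∀ p, ‖iteratedFDeriv ℝ k P p‖ ≤ C
  η_bdd : ∀ k : ℕ, k ≤ 4 → ∃ C, ∀ x, |iteratedDeriv k η x| ≤ C
  u_even : ∀ x y, u (-x, y) = u (x, y)
  v_odd : ∀ x y, v (-x, y) = -v (x, y)
  P_even : ∀ x y, P (-x, y) = P (x, y)
  η_even : ∀ x, η (-x) = η x
  euler_x : ∀ x y, -d < y → y < η x →
    u (x, y) * pdX u (x, y) + v (x, y) * pdY u (x, y) = -pdX P (x, y)
  euler_y : ∀ x y, -d < y → y < η x →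
    u (x, y) * pdX v (x, y) + v (x, y) * pdY v (x, y) = -(pdY P (x, y)) - g
  incompressible : ∀ x y, -d < y → y < η x → pdX u (x, y) + pdY v (x, y) = 0
  surface_pressure : ∀ x, P (x, η x) = Patm
  surface_kinematic : ∀ x, v (x, η x) = deriv η x * u (x, η x)
  bed_kinematic : ∀ x, v (x, -d) = 0
  nonstagnant : ∃ δ > 0, ∀ x y, -d ≤ y → y ≤ η x → u (x, y) ≤ -δ
  psi_x : ∀ x y, -d ≤ y → y ≤ η x → pdX ψ (x, y) = -v (x, y)
  psi_y : ∀ x y, -d ≤ y → y ≤ η x → pdY ψ (x, y) = u (x, y)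
  psi_surface : ∀ x, ψ (x, η x) = 0
  psi_bed : ∀ x, ψ (x, -d) = m
  vorticity_eq : ∀ x y, -d < y → y < η x → pdX v (x, y) - pdY u (x, y) = γ (ψ (x, y))
  /-- Asymptotic conditions: uniformly in `y` as `x → ±∞`, `η → 0`, `Dᵏ v → 0` and
  `Dᵏ u → Dᵏ uInf` for all partial derivatives of order `k = 0, 1, 2`. -/
  asymptotic : ∀ ε > 0, ∃ R, ∀ x y, R ≤ |x| → -d ≤ y → y ≤ η x →
    |η x| < ε ∧
    |v (x, y)| < ε ∧ |pdX v (x, y)| < ε ∧ |pdY v (x, y)| < ε ∧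
    |pdX (pdX v) (x, y)| < ε ∧ |pdY (pdX v) (x, y)| < ε ∧ |pdY (pdY v) (x, y)| < ε ∧
    |u (x, y) - uInf y| < ε ∧ |pdX u (x, y)| < ε ∧ |pdY u (x, y) - deriv uInf y| < ε ∧
    |pdX (pdX u) (x, y)| < ε ∧ |pdY (pdX u) (x, y)| < ε ∧
    |pdY (pdY u) (x, y) - deriv (deriv uInf) y| < ε

namespace SolitaryWave

variable {g Patm : ℝ}

/-- The closure of the fluid domain `Ω`. -/
def Ωbar (W : SolitaryWave g Patm) : Set (ℝ × ℝ) :=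
  {p | -W.d ≤ p.2 ∧ p.2 ≤ W.η p.1}

/-- The open right half `Ω⁺` of the fluid domain. -/
def Ωplus (W : SolitaryWave g Patm) : Set (ℝ × ℝ) :=
  {p | 0 < p.1 ∧ -W.d < p.2 ∧ p.2 < W.η p.1}

/-- The right half `S⁺` of the free surface. -/
def Splus (W : SolitaryWave g Patm) : Set (ℝ × ℝ) :=
  {p | 0 < p.1 ∧ p.2 = W.η p.1}

/-- A solitary wave is trivial if `v ≡ 0`, `η ≡ 0` and `u (x, y) = uInf y`. -/
def IsTrivial (W : SolitaryWave g Patm) : Prop :=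
  (∀ p, W.v p = 0) ∧ (∀ x, W.η x = 0) ∧ (∀ x y, W.u (x, y) = W.uInf y)

/-- The streamline monotonicity condition `v > 0` on `Ω⁺ ∪ S⁺`. -/
def MonotoneHalf (W : SolitaryWave g Patm) : Prop :=
  ∀ p ∈ W.Ωplus ∪ W.Splus, 0 < W.v p

/-- Membership in the water-wave set 𝒲 : the vorticity function satisfies
`γ ≤ 0`, `γ' ≤ 0`, `γ'' ≤ 0` on `[0, m]`, and the wave is either trivial or
monotone. -/
def MemW (W : SolitaryWave g Patm) : Prop :=
  (∀ s ∈ Icc (0:ℝ) W.m, W.γ s ≤ 0) ∧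
  (∀ s ∈ Icc (0:ℝ) W.m, derivWithin W.γ (Icc 0 W.m) s ≤ 0) ∧
  (∀ s ∈ Icc (0:ℝ) W.m, derivWithin (derivWithin W.γ (Icc 0 W.m)) (Icc 0 W.m) s ≤ 0) ∧
  (W.IsTrivial ∨ W.MonotoneHalf)

/-- The trace of `(u, v, u_x, v_x, u_y, u_xx, u_xy)` on the free surface. -/
noncomputable def trace (W : SolitaryWave g Patm) (x : ℝ) :
    ℝ × ℝ × ℝ × ℝ × ℝ × ℝ × ℝ :=
  (W.u (x, W.η x), W.v (x, W.η x), pdX W.u (x, W.η x), pdX W.v (x, W.η x),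
    pdY W.u (x, W.η x), pdX (pdX W.u) (x, W.η x), pdY (pdX W.u) (x, W.η x))

end SolitaryWave

set_option maxHeartbeats 1600000 in
/-- **Lemma (slope bound from `u_x < 0`, solitary case).**  If a solitary wave in `𝒲`
satisfies `u_x < 0` everywhere on `Ω⁺ ∪ S⁺`, then the supremum of `|v/u|` over the closure
of `Ω` is strictly less than `1`. -/
theorem solitary_slope_sup_lt_one (g Patm : ℝ) (hg : 0 < g)
    (W : SolitaryWave g Patm) (hMW : W.MemW)
    (hux : ∀ p ∈ W.Ωplus ∪ W.Splus, pdX W.u p < 0) :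
    ∃ c < (1:ℝ), ∀ p ∈ W.Ωbar, |W.v p / W.u p| ≤ c := by
  classical
  obtain ⟨δ, hδ, hns⟩ := W.nonstagnant
  obtain ⟨R₀, hR₀⟩ := W.asymptotic (δ/2) (by linarith)
  set R' : ℝ := max R₀ 1 with hR'def
  have hR'1 : (1:ℝ) ≤ R' := le_max_right _ _
  have hud : Differentiable ℝ W.u := W.u_smooth.differentiable (by norm_num)
  have hvd : Differentiable ℝ W.v := W.v_smooth.differentiable (by norm_num)
  have hψd : Differentiable ℝ W.ψ := W.ψ_smooth.differentiable (by norm_num)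
  have hηd : Differentiable ℝ W.η := W.η_smooth.differentiable (by norm_num)
  have hucont : Continuous W.u := W.u_smooth.continuous
  have hvcont : Continuous W.v := W.v_smooth.continuous
  have hηcont : Continuous W.η := W.η_smooth.continuous
  -- tail bound
  have htail : ∀ p : ℝ × ℝ, -W.d ≤ p.2 → p.2 ≤ W.η p.1 → R' ≤ |p.1| →
      |W.v p / W.u p| ≤ 1/2 := by
    intro p h1 h2 h3
    have h := hR₀ p.1 p.2 (le_trans (le_max_left _ _) h3) h1 h2
    have hv : |W.v p| < δ/2 := h.2.1
    have hu : W.u p ≤ -δ := hns p.1 p.2 h1 h2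
    have hu' : δ ≤ |W.u p| := by rw [abs_of_neg (by linarith)]; linarith
    rw [abs_div, div_le_iff₀ (by linarith : (0:ℝ) < |W.u p|)]
    linarith
  -- η never equals -d
  have hηne : ∀ x, W.η x ≠ -W.d := by
    intro x hx
    have h1 := W.psi_surface x
    have h2 := W.psi_bed x
    rw [hx] at h1
    rw [h1] at h2
    exact absurd h2 (ne_of_lt W.m_pos)
  by_cases hdom : ∃ x, -W.d ≤ W.η x
  swap
  · push_neg at hdom
    exact ⟨0, by norm_num, fun p hp => absurd (le_trans hp.1 hp.2) (not_le.mpr (hdom p.1))⟩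
  obtain ⟨x₁, hx₁⟩ := hdom
  have hη : ∀ x, -W.d < W.η x := by
    intro x
    rcases lt_or_ge (-W.d) (W.η x) with h | h
    · exact h
    · exfalso
      have hlt : W.η x < -W.d := lt_of_le_of_ne h (hηne x)
      have hc : ContinuousOn W.η (uIcc x x₁) := hηcont.continuousOn
      have hmem : -W.d ∈ uIcc (W.η x) (W.η x₁) := by
        rw [mem_uIcc]; left; exact ⟨le_of_lt hlt, hx₁⟩
      obtain ⟨ξ, _, hξ⟩ := intermediate_value_uIcc hc hmem
      exact hηne ξ hξ
  -- the compact core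
  set K : Set (ℝ × ℝ) := {p : ℝ × ℝ | 0 ≤ p.1 ∧ p.1 ≤ R' ∧ -W.d ≤ p.2 ∧ p.2 ≤ W.η p.1}
    with hKdef
  have hKclosed : IsClosed K := by
    have h1 : IsClosed {p : ℝ × ℝ | 0 ≤ p.1} := isClosed_le continuous_const continuous_fst
    have h2 : IsClosed {p : ℝ × ℝ | p.1 ≤ R'} := isClosed_le continuous_fst continuous_const
    have h3 : IsClosed {p : ℝ × ℝ | -W.d ≤ p.2} := isClosed_le continuous_const continuous_snd
    have h4 : IsClosed {p : ℝ × ℝ | p.2 ≤ W.η p.1} :=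
      isClosed_le continuous_snd (hηcont.comp continuous_fst)
    have : K = {p : ℝ × ℝ | 0 ≤ p.1} ∩ ({p | p.1 ≤ R'} ∩ ({p | -W.d ≤ p.2} ∩ {p | p.2 ≤ W.η p.1})) := rfl
    rw [this]
    exact h1.inter (h2.inter (h3.inter h4))
  obtain ⟨Cη, hCη⟩ := W.η_bdd 0 (by norm_num)
  have hCη' : ∀ x, W.η x ≤ Cη := by
    intro x
    have := hCη x
    rw [iteratedDeriv_zero] at this
    exact le_trans (le_abs_self _) this
  have hKcomp : IsCompact K := by
    apply (isCompact_Icc (a := ((0:ℝ), -W.d)) (b := (R', Cη))).of_isClosed_subset hKclosed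
    rintro p ⟨h1, h2, h3, h4⟩
    simp only [mem_Icc, Prod.le_def]
    exact ⟨⟨h1, h3⟩, ⟨h2, le_trans h4 (hCη' p.1)⟩⟩
  have h0R : (0:ℝ) ≤ R' := le_trans zero_le_one hR'1
  have hKne : K.Nonempty := ⟨(0, W.η 0), le_refl 0, h0R, le_of_lt (hη 0), le_refl _⟩
  have hrcont : ContinuousOn (fun p : ℝ × ℝ => |W.v p / W.u p|) K := by
    apply ContinuousOn.abs
    apply ContinuousOn.div hvcont.continuousOn hucont.continuousOn
    rintro p ⟨_, _, h3, h4⟩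
    have := hns p.1 p.2 h3 h4
    exact ne_of_lt (by linarith)
  obtain ⟨pstar, hpK, hpmax⟩ := hKcomp.exists_isMaxOn hKne hrcont
  obtain ⟨x₀, y₀⟩ := pstar
  set S : ℝ := |W.v (x₀, y₀) / W.u (x₀, y₀)| with hSdef
  -- the key claim
  have hS1 : S < 1 := by
    by_contra hcon
    push_neg at hcon
    have hx0 : (0:ℝ) ≤ x₀ := hpK.1
    have hxR : x₀ ≤ R' := hpK.2.1
    have hyd : -W.d ≤ y₀ := hpK.2.2.1
    have hyη : y₀ ≤ W.η x₀ := hpK.2.2.2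
    have hustar : W.u (x₀, y₀) ≤ -δ := hns x₀ y₀ hyd hyη
    have huneg : W.u (x₀, y₀) < 0 := by linarith
    have hx0' : 0 < x₀ := by
      rcases lt_or_eq_of_le hx0 with h | h
      · exact h
      · exfalso
        have hv0 : W.v (x₀, y₀) = 0 := by
          have h2 := W.v_odd x₀ y₀
          rw [← h, neg_zero] at h2
          rw [← h]
          linarith
        rw [hSdef, hv0, zero_div, abs_zero] at hcon
        linarith
    have hxR' : x₀ < R' := by
      rcases lt_or_eq_of_le hxR with h | h
      · exact h
      · exfalso
        have := htail (x₀, y₀) hyd hyη (by show R' ≤ |x₀|; rw [abs_of_nonneg hx0, h])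
        rw [← hSdef] at this
        linarith
    have hyd' : -W.d < y₀ := by
      rcases lt_or_eq_of_le hyd with h | h
      · exact h
      · exfalso
        have hv0 : W.v (x₀, y₀) = 0 := by rw [← h]; exact W.bed_kinematic x₀
        rw [hSdef, hv0, zero_div, abs_zero] at hcon
        linarith
    -- monotone
    have hmono : W.MonotoneHalf := by
      rcases hMW.2.2.2 with htriv | h
      swap
      · exact h
      exfalso
      have hqΩ : ((1:ℝ), -W.d/2) ∈ W.Ωplus ∪ W.Splus := by
        left
        refine ⟨one_pos, by linarith [W.d_pos], ?_⟩
        rw [htriv.2.1 1]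
        linarith [W.d_pos]
      have hueq : W.u = fun p : ℝ × ℝ => W.uInf p.2 := funext fun p => htriv.2.2 p.1 p.2
      have hpdx : pdX W.u (1, -W.d/2) = 0 := by
        rw [hueq]
        have h1 : HasFDerivAt (fun p : ℝ × ℝ => W.uInf p.2)
            ((deriv W.uInf (-W.d/2)) • (ContinuousLinearMap.snd ℝ ℝ ℝ)) (1, -W.d/2) := by
          have h2 : HasDerivAt W.uInf (deriv W.uInf (-W.d/2)) (-W.d/2) :=
            ((W.uInf_smooth.differentiable (by norm_num)) _).hasDerivAt
          exact h2.comp_hasFDerivAt ((1:ℝ), -W.d/2) hasFDerivAt_snd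
        show fderiv ℝ (fun p : ℝ × ℝ => W.uInf p.2) (1, -W.d/2) ((1:ℝ), (0:ℝ)) = 0
        rw [h1.fderiv]
        simp
      have := hux _ hqΩ
      rw [hpdx] at this
      exact lt_irrefl 0 this
    have hvpos : 0 < W.v (x₀, y₀) := by
      rcases lt_or_eq_of_le hyη with h | h
      · exact hmono _ (Or.inl ⟨hx0', hyd', h⟩)
      · exact hmono _ (Or.inr ⟨hx0', h⟩)
    have hSv : W.v (x₀, y₀) = S * (-W.u (x₀, y₀)) := by
      rw [hSdef, abs_div, abs_of_pos hvpos, abs_of_neg huneg]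
      rw [div_mul_cancel₀ _ (by linarith : -W.u (x₀, y₀) ≠ 0)]
    have hS0 : (0:ℝ) < S := by linarith
    -- the comparison function
    set w : ℝ × ℝ → ℝ := fun p => W.v p + S * W.u p with hwdef
    have hw0 : w (x₀, y₀) = 0 := by
      show W.v (x₀, y₀) + S * W.u (x₀, y₀) = 0
      linarith
    have hwK : ∀ p ∈ K, w p ≤ 0 := by
      rintro p ⟨h1, h2, h3, h4⟩
      have hup : W.u p ≤ -δ := hns p.1 p.2 h3 h4
      have hupneg : W.u p < 0 := by linarith
      have habs0 : (0:ℝ) < |W.u p| := abs_pos.mpr (ne_of_lt hupneg)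
      have hr : |W.v p / W.u p| ≤ S := hpmax ⟨h1, h2, h3, h4⟩
      rw [abs_div, div_le_iff₀ habs0] at hr
      have h5 : |W.u p| = -W.u p := abs_of_neg hupneg
      show W.v p + S * W.u p ≤ 0
      have h6 : W.v p ≤ |W.v p| := le_abs_self _
      rw [h5] at hr
      nlinarith
    have hw' : ∀ q : ℝ × ℝ, HasFDerivAt w (fderiv ℝ W.v q + S • fderiv ℝ W.u q) q := fun q =>
      ((hvd q).hasFDerivAt).add (((hud q).hasFDerivAt).const_smul S)
    -- psi in [0, m]
    have hψmem : ∀ x y, -W.d ≤ y → y ≤ W.η x → W.ψ (x, y) ∈ Icc (0:ℝ) W.m := by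
      intro x y h1 h2
      have hder : ∀ t : ℝ, HasDerivAt (fun t => W.ψ (x, t)) (fderiv ℝ W.ψ (x, t) ((0:ℝ), (1:ℝ))) t := by
        intro t
        exact ((hψd (x, t)).hasFDerivAt).comp_hasDerivAt t
          ((hasDerivAt_const t x).prodMk (hasDerivAt_id t))
      have hanti : AntitoneOn (fun t => W.ψ (x, t)) (Icc (-W.d) (W.η x)) := by
        apply antitoneOn_of_deriv_nonpos (convex_Icc _ _)
        · exact (W.ψ_smooth.continuous.comp (continuous_const.prodMk continuous_id)).continuousOn
        · intro t _
          exact ((hder t).differentiableAt).differentiableWithinAt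
        · intro t ht
          rw [interior_Icc] at ht
          rw [(hder t).deriv]
          have hpy := W.psi_y x t (le_of_lt ht.1) (le_of_lt ht.2)
          rw [pdY] at hpy
          rw [hpy]
          linarith [hns x t (le_of_lt ht.1) (le_of_lt ht.2)]
      constructor
      · have h3 := hanti (⟨h1, h2⟩ : y ∈ Icc (-W.d) (W.η x))
          (⟨le_trans h1 h2, le_refl _⟩ : W.η x ∈ Icc (-W.d) (W.η x)) h2
        have h4 : W.ψ (x, W.η x) ≤ W.ψ (x, y) := h3
        rw [W.psi_surface x] at h4
        exact h4
      · have h3 := hanti (⟨le_refl _, le_trans h1 h2⟩ : -W.d ∈ Icc (-W.d) (W.η x))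
          (⟨h1, h2⟩ : y ∈ Icc (-W.d) (W.η x)) h1
        have h4 : W.ψ (x, y) ≤ W.ψ (x, -W.d) := h3
        rw [W.psi_bed x] at h4
        exact h4
    -- continuity of the PDE combinations
    have hpdcont : ∀ (f : ℝ × ℝ → ℝ), ContDiff ℝ 3 f → ∀ z : ℝ × ℝ,
        Continuous (fun q => fderiv ℝ f q z) := fun f hf z =>
      (hf.continuous_fderiv (by norm_num)).clm_apply continuous_const
    have hAcont : Continuous (fun q : ℝ × ℝ => pdX W.u q + pdY W.v q) :=
      (hpdcont _ W.u_smooth (1, 0)).add (hpdcont _ W.v_smooth (0, 1))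
    have hBcont : Continuous (fun q : ℝ × ℝ => pdX W.v q - pdY W.u q) :=
      (hpdcont _ W.v_smooth (1, 0)).sub (hpdcont _ W.u_smooth (0, 1))
    rcases lt_or_eq_of_le hyη with hylt | hyeq
    · -- INTERIOR CASE
      have hinc : pdX W.u (x₀, y₀) + pdY W.v (x₀, y₀) = 0 := W.incompressible x₀ y₀ hyd' hylt
      have hvort : pdX W.v (x₀, y₀) - pdY W.u (x₀, y₀) ≤ 0 := by
        rw [W.vorticity_eq x₀ y₀ hyd' hylt]
        exact hMW.1 _ (hψmem x₀ y₀ hyd hyη)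
      have ha1 : pdX W.u (x₀, y₀) < 0 := hux (x₀, y₀) (Or.inl ⟨hx0', hyd', hylt⟩)
      have hV : IsOpen {p : ℝ × ℝ | 0 < p.1 ∧ p.1 < R' ∧ -W.d < p.2 ∧ p.2 < W.η p.1} := by
        have : {p : ℝ × ℝ | 0 < p.1 ∧ p.1 < R' ∧ -W.d < p.2 ∧ p.2 < W.η p.1}
            = {p : ℝ × ℝ | 0 < p.1} ∩ ({p | p.1 < R'} ∩ ({p | -W.d < p.2} ∩ {p | p.2 < W.η p.1})) := rfl
        rw [this]
        exact (isOpen_lt continuous_const continuous_fst).inter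
          ((isOpen_lt continuous_fst continuous_const).inter
            ((isOpen_lt continuous_const continuous_snd).inter
              (isOpen_lt continuous_snd (hηcont.comp continuous_fst))))
      have hlocal : IsLocalMax w (x₀, y₀) := by
        have hmem : {p : ℝ × ℝ | 0 < p.1 ∧ p.1 < R' ∧ -W.d < p.2 ∧ p.2 < W.η p.1} ∈ nhds (x₀, y₀) :=
          hV.mem_nhds ⟨hx0', hxR', hyd', hylt⟩
        filter_upwards [hmem] with p hp
        rw [hw0]
        exact hwK p ⟨le_of_lt hp.1, le_of_lt hp.2.1, le_of_lt hp.2.2.1, le_of_lt hp.2.2.2⟩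
      have hzero := hlocal.hasFDerivAt_eq_zero (hw' (x₀, y₀))
      have e1 : pdX W.v (x₀, y₀) + S * pdX W.u (x₀, y₀) = 0 := by
        have h := ContinuousLinearMap.ext_iff.mp hzero ((1:ℝ), (0:ℝ))
        simp only [ContinuousLinearMap.add_apply, ContinuousLinearMap.coe_smul',
          Pi.smul_apply, smul_eq_mul, ContinuousLinearMap.zero_apply] at h
        simp only [pdX]
        linarith
      have e2 : pdY W.v (x₀, y₀) + S * pdY W.u (x₀, y₀) = 0 := by
        have h := ContinuousLinearMap.ext_iff.mp hzero ((0:ℝ), (1:ℝ))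
        simp only [ContinuousLinearMap.add_apply, ContinuousLinearMap.coe_smul',
          Pi.smul_apply, smul_eq_mul, ContinuousLinearMap.zero_apply] at h
        simp only [pdY]
        linarith
      -- contradiction
      have hSa2 : S * pdY W.u (x₀, y₀) = pdX W.u (x₀, y₀) := by linarith
      have h2 : -(S * pdX W.u (x₀, y₀)) ≤ pdY W.u (x₀, y₀) := by linarith
      have h3 : S * -(S * pdX W.u (x₀, y₀)) ≤ S * pdY W.u (x₀, y₀) :=
        mul_le_mul_of_nonneg_left h2 (le_of_lt hS0)
      rw [hSa2] at h3
      nlinarith [mul_pos (mul_pos hS0 hS0) (show (0:ℝ) < -pdX W.u (x₀, y₀) by linarith)]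
    · -- SURFACE CASE
      have ha1 : pdX W.u (x₀, y₀) < 0 := hux (x₀, y₀) (Or.inr ⟨hx0', hyeq⟩)
      have htend : Filter.Tendsto (fun t => ((x₀ : ℝ), t)) (nhdsWithin y₀ (Iio y₀)) (nhds (x₀, y₀)) :=
        ((continuous_const.prodMk continuous_id).tendsto y₀).mono_left nhdsWithin_le_nhds
      have hEv : ∀ᶠ t in nhdsWithin y₀ (Iio y₀), -W.d < t ∧ t < W.η x₀ := by
        have hIoo : Ioo (-W.d) y₀ ∈ nhdsWithin y₀ (Iio y₀) :=
          Ioo_mem_nhdsLT_of_mem ⟨hyd', le_refl y₀⟩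
        filter_upwards [hIoo] with t ht
        exact ⟨ht.1, hyeq ▸ ht.2⟩
      have hinc : pdX W.u (x₀, y₀) + pdY W.v (x₀, y₀) = 0 := by
        have h1 : Filter.Tendsto (fun t => pdX W.u (x₀, t) + pdY W.v (x₀, t))
            (nhdsWithin y₀ (Iio y₀)) (nhds (pdX W.u (x₀, y₀) + pdY W.v (x₀, y₀))) :=
          (hAcont.tendsto (x₀, y₀)).comp htend
        have h2 : Filter.Tendsto (fun t => pdX W.u (x₀, t) + pdY W.v (x₀, t))
            (nhdsWithin y₀ (Iio y₀)) (nhds 0) := by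
          apply Filter.Tendsto.congr' _ tendsto_const_nhds
          filter_upwards [hEv] with t ht
          exact (W.incompressible x₀ t ht.1 ht.2).symm
        exact (tendsto_nhds_unique h1 h2)
      have hvort : pdX W.v (x₀, y₀) - pdY W.u (x₀, y₀) ≤ 0 := by
        have h1 : Filter.Tendsto (fun t => pdX W.v (x₀, t) - pdY W.u (x₀, t))
            (nhdsWithin y₀ (Iio y₀)) (nhds (pdX W.v (x₀, y₀) - pdY W.u (x₀, y₀))) :=
          (hBcont.tendsto (x₀, y₀)).comp htend
        apply le_of_tendsto h1
        filter_upwards [hEv] with t ht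
        rw [W.vorticity_eq x₀ t ht.1 ht.2]
        exact hMW.1 _ (hψmem x₀ t (le_of_lt ht.1) (le_of_lt ht.2))
      -- surface slope
      have hη' : deriv W.η x₀ = -S := by
        have hk := W.surface_kinematic x₀
        rw [← hyeq] at hk
        have h2 : (deriv W.η x₀ + S) * W.u (x₀, y₀) = 0 := by
          have h3 : deriv W.η x₀ * W.u (x₀, y₀) + S * W.u (x₀, y₀) = 0 := by linarith
          linear_combination h3
        rcases mul_eq_zero.mp h2 with h | h
        · linarith
        · exact absurd h (ne_of_lt huneg)
      -- tangential condition
      have hcurve : HasDerivAt (fun x => ((x : ℝ), W.η x)) ((1:ℝ), deriv W.η x₀) x₀ :=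
        (hasDerivAt_id x₀).prodMk ((hηd x₀).hasDerivAt)
      have hF : HasDerivAt (fun x => w (x, W.η x))
          ((fderiv ℝ W.v (x₀, y₀) + S • fderiv ℝ W.u (x₀, y₀)) ((1:ℝ), deriv W.η x₀)) x₀ := by
        have h := (hw' (x₀, W.η x₀)).comp_hasDerivAt x₀ hcurve
        rw [← hyeq] at h
        exact h
      have hFmax : IsLocalMax (fun x => w (x, W.η x)) x₀ := by
        have hIoo : Ioo (0:ℝ) R' ∈ nhds x₀ := Ioo_mem_nhds hx0' hxR'
        filter_upwards [hIoo] with x hx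
        have h1 : w (x, W.η x) ≤ 0 :=
          hwK _ ⟨le_of_lt hx.1, le_of_lt hx.2, le_of_lt (hη x), le_refl _⟩
        have h2 : w (x₀, W.η x₀) = 0 := by rw [← hyeq]; exact hw0
        rw [h2]
        exact h1
      have htan : (fderiv ℝ W.v (x₀, y₀) + S • fderiv ℝ W.u (x₀, y₀)) ((1:ℝ), deriv W.η x₀) = 0 := by
        have h := hFmax.deriv_eq_zero
        rw [hF.deriv] at h
        exact h
      have hexp : ((1:ℝ), deriv W.η x₀) = ((1:ℝ), (0:ℝ)) + (deriv W.η x₀) • ((0:ℝ), (1:ℝ)) := by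
        simp [Prod.ext_iff]
      have htan' : (pdX W.v (x₀, y₀) + S * pdX W.u (x₀, y₀))
          + deriv W.η x₀ * (pdY W.v (x₀, y₀) + S * pdY W.u (x₀, y₀)) = 0 := by
        rw [hexp, map_add, map_smul] at htan
        simp only [ContinuousLinearMap.add_apply, ContinuousLinearMap.coe_smul',
          Pi.smul_apply, smul_eq_mul] at htan
        simp only [pdX, pdY]
        linear_combination htan
      -- vertical condition
      have hHd : HasDerivAt (fun t => w (x₀, t))
          ((fderiv ℝ W.v (x₀, y₀) + S • fderiv ℝ W.u (x₀, y₀)) ((0:ℝ), (1:ℝ))) y₀ :=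
        (hw' (x₀, y₀)).comp_hasDerivAt y₀ ((hasDerivAt_const y₀ x₀).prodMk (hasDerivAt_id y₀))
      have hμ : 0 ≤ (fderiv ℝ W.v (x₀, y₀) + S • fderiv ℝ W.u (x₀, y₀)) ((0:ℝ), (1:ℝ)) := by
        have hslope := hasDerivAt_iff_tendsto_slope.mp hHd
        have hslope' : Filter.Tendsto (slope (fun t => w (x₀, t)) y₀) (nhdsWithin y₀ (Iio y₀))
            (nhds ((fderiv ℝ W.v (x₀, y₀) + S • fderiv ℝ W.u (x₀, y₀)) ((0:ℝ), (1:ℝ)))) :=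
          hslope.mono_left (nhdsWithin_mono _ (fun t ht => ne_of_lt ht))
        apply ge_of_tendsto hslope'
        filter_upwards [Ioo_mem_nhdsLT_of_mem (⟨hyd', le_refl y₀⟩ : y₀ ∈ Ioc (-W.d) y₀)] with t ht
        have hw_t : w (x₀, t) ≤ 0 :=
          hwK _ ⟨le_of_lt hx0', le_of_lt hxR', le_of_lt ht.1, hyeq ▸ le_of_lt ht.2⟩
        rw [slope_def_field]
        apply div_nonneg_iff.mpr
        right
        refine ⟨by rw [hw0]; linarith, by linarith [ht.2]⟩
      have hμ' : 0 ≤ pdY W.v (x₀, y₀) + S * pdY W.u (x₀, y₀) := by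
        have h1 := hμ
        simp only [ContinuousLinearMap.add_apply, ContinuousLinearMap.coe_smul',
          Pi.smul_apply, smul_eq_mul] at h1
        simp only [pdY]
        linarith
      -- final contradiction
      rw [hη'] at htan'
      have hb1 : pdX W.v (x₀, y₀) = S*S*(pdY W.u (x₀, y₀)) - 2*S*(pdX W.u (x₀, y₀)) := by
        linear_combination htan' + S * hinc
      have hSS : (0:ℝ) ≤ S * S - 1 := by nlinarith
      have hf4' : 0 ≤ -(pdX W.u (x₀, y₀)) + S * (pdY W.u (x₀, y₀)) := by linarith
      have hb1S : S * pdX W.v (x₀, y₀)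
          = S*(S*(S * pdY W.u (x₀, y₀))) - 2*(S*(S*pdX W.u (x₀, y₀))) := by
        linear_combination S * hb1
      have hint1 : 0 ≤ (-(pdX W.u (x₀, y₀)) + S * (pdY W.u (x₀, y₀))) * (S*S - 1) :=
        mul_nonneg hf4' hSS
      have hint2 : S * (pdX W.v (x₀, y₀) - pdY W.u (x₀, y₀)) ≤ 0 :=
        mul_nonpos_of_nonneg_of_nonpos (le_of_lt hS0) hvort
      have hint3 : (0:ℝ) < S * S * (-pdX W.u (x₀, y₀)) :=
        mul_pos (mul_pos hS0 hS0) (by linarith)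
      nlinarith [hint1, hint2, hint3, hb1S]
  -- conclusion
  refine ⟨max S (1/2), max_lt hS1 (by norm_num), ?_⟩
  intro p hp
  rcases le_or_gt R' |p.1| with hbig | hsmall
  · exact le_trans (htail p hp.1 hp.2 hbig) (le_max_right _ _)
  · have hq : (|p.1|, p.2) ∈ K := by
      refine ⟨abs_nonneg _, le_of_lt hsmall, hp.1, ?_⟩
      rcases le_or_gt 0 p.1 with h | h
      · rw [abs_of_nonneg h]; exact hp.2
      · rw [abs_of_neg h, W.η_even]; exact hp.2
    have heqr : |W.v (|p.1|, p.2) / W.u (|p.1|, p.2)| = |W.v p / W.u p| := by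
      rcases le_or_gt 0 p.1 with h | h
      · rw [abs_of_nonneg h]
      · rw [abs_of_neg h, W.v_odd p.1 p.2, W.u_even p.1 p.2, neg_div, abs_neg]
    calc |W.v p / W.u p| = |W.v (|p.1|, p.2) / W.u (|p.1|, p.2)| := heqr.symm
      _ ≤ S := hpmax hq
      _ ≤ max S (1/2) := le_max_left _ _
end

section
/- Let g > 0, m > 0 and γ₀ < 0, and let Γ : [−m, 0] → ℝ be a C² convex function (Γ″ ≥ 0) with Γ(0) = 0 and Γ′(0) = γ₀. Then Γ ≥ 0 on [−m, 0], the function Q̃(λ) = λ/2 + g·∫_{−m}^{0} (λ + 2Γ(s))^{−1/2} ds is well defined and strictly convex on (0, ∞), and Q̃′(g²/γ₀²) > 0. Consequently, any critical point λ_cr ∈ (0, ∞) of Q̃ (i.e., Q̃′(λ_cr) = 0) satisfies γ₀² · λ_cr < g². -/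
open Set

open MeasureTheory

open scoped Interval

lemma thcpb_hasDerivAt_invSqrt {u : ℝ → ℝ} {u' x : ℝ} (hu : HasDerivAt u u' x)
    (hx : 0 < u x) :
    HasDerivAt (fun y => 1 / Real.sqrt (u y)) (-(u' / (2 * (u x * Real.sqrt (u x))))) x := by
  have hs : Real.sqrt (u x) ≠ 0 := by positivity
  have h1 := (hu.sqrt hx.ne').inv hs
  simp only [one_div]
  refine h1.congr_deriv ?_
  have h2 : Real.sqrt (u x) ^ 2 = u x := Real.sq_sqrt hx.le
  rw [h2]; ring

lemma thcpb_contDiff_deriv (Γ : ℝ → ℝ) (hΓ : ContDiff ℝ 2 Γ) : ContDiff ℝ 1 (deriv Γ) := by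
  have h2 : ContDiff ℝ ((1:ℕ) + 1) Γ := by exact_mod_cast hΓ
  rw [contDiff_succ_iff_deriv] at h2
  exact_mod_cast h2.2.2

lemma thcpb_gamma_lb (m γ₀ : ℝ) (Γ : ℝ → ℝ) (hm : 0 < m) (hγ₀ : γ₀ < 0)
    (hΓ : ContDiff ℝ 2 Γ)
    (hconv : ∀ s ∈ Icc (-m) (0:ℝ), 0 ≤ deriv (deriv Γ) s)
    (hΓ0 : Γ 0 = 0) (hΓ'0 : deriv Γ 0 = γ₀) :
    ∀ s ∈ Icc (-m) (0:ℝ), γ₀ * s ≤ Γ s := by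
  have hΓd : Differentiable ℝ Γ := hΓ.differentiable (by norm_num)
  have hΓ' : ContDiff ℝ 1 (deriv Γ) := thcpb_contDiff_deriv Γ hΓ
  have hmono : MonotoneOn (deriv Γ) (Icc (-m) 0) := by
    apply monotoneOn_of_deriv_nonneg (convex_Icc _ _) hΓ'.continuous.continuousOn
      (hΓ'.differentiable one_ne_zero).differentiableOn
    intro x hx
    exact hconv x (interior_subset hx)
  have hanti : AntitoneOn (fun s => Γ s - γ₀ * s) (Icc (-m) 0) := by
    apply antitoneOn_of_deriv_nonpos (convex_Icc _ _)
      (hΓ.continuous.sub (by fun_prop : Continuous fun s : ℝ => γ₀ * s)).continuousOn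
      ((hΓd.sub (by fun_prop : Differentiable ℝ fun s : ℝ => γ₀ * s)).differentiableOn)
    intro x hx
    rw [interior_Icc] at hx
    have hlin : HasDerivAt (fun s : ℝ => γ₀ * s) γ₀ x := by
      simpa using (hasDerivAt_id x).const_mul γ₀
    have hd : deriv (fun s => Γ s - γ₀ * s) x = deriv Γ x - γ₀ := by
      rw [deriv_fun_sub (hΓd x) hlin.differentiableAt, hlin.deriv]
    show deriv (fun s => Γ s - γ₀ * s) x ≤ 0
    rw [hd, sub_nonpos, ← hΓ'0]
    exact hmono (Ioo_subset_Icc_self hx) (right_mem_Icc.2 (by linarith)) hx.2.le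
  intro s hs
  have h := hanti hs (right_mem_Icc.2 (by linarith)) hs.2
  simp only [hΓ0, mul_zero, zero_sub] at h
  linarith

lemma thcpb_integrable (m : ℝ) (Γ : ℝ → ℝ) (hm : 0 < m) (hΓc : Continuous Γ)
    (hΓnn : ∀ s ∈ Icc (-m) (0:ℝ), 0 ≤ Γ s) {l : ℝ} (hl : 0 < l) :
    IntervalIntegrable (fun s => 1 / Real.sqrt (l + 2 * Γ s)) volume (-m) 0 := by
  apply ContinuousOn.intervalIntegrable
  rw [uIcc_of_le (by linarith)]
  apply ContinuousOn.div continuousOn_const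
  · exact (Real.continuous_sqrt.comp (continuous_const.add (continuous_const.mul hΓc))).continuousOn
  · intro x hx
    have h := hΓnn x hx
    have : 0 < l + 2 * Γ x := by linarith
    exact (Real.sqrt_pos.mpr this).ne'

lemma thcpb_integrableF' (m : ℝ) (Γ : ℝ → ℝ) (hm : 0 < m) (hΓc : Continuous Γ)
    (hΓnn : ∀ s ∈ Icc (-m) (0:ℝ), 0 ≤ Γ s) {l : ℝ} (hl : 0 < l) :
    IntervalIntegrable (fun s => 1 / (2 * ((l + 2 * Γ s) * Real.sqrt (l + 2 * Γ s))))
      volume (-m) 0 := by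
  apply ContinuousOn.intervalIntegrable
  rw [uIcc_of_le (by linarith)]
  apply ContinuousOn.div continuousOn_const
  · exact (continuous_const.mul ((continuous_const.add (continuous_const.mul hΓc)).mul
      (Real.continuous_sqrt.comp (continuous_const.add (continuous_const.mul hΓc))))).continuousOn
  · intro x hx
    have h := hΓnn x hx
    have h1 : 0 < l + 2 * Γ x := by linarith
    have h2 : 0 < Real.sqrt (l + 2 * Γ x) := Real.sqrt_pos.mpr h1
    positivity

lemma thcpb_denom_mono {c u : ℝ} (hc : 0 < c) (hcu : c ≤ u) :
    1 / (2 * (u * Real.sqrt u)) ≤ 1 / (2 * (c * Real.sqrt c)) := by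
  have hs : 0 < Real.sqrt c := Real.sqrt_pos.mpr hc
  have h1 : 0 < 2 * (c * Real.sqrt c) := by positivity
  apply one_div_le_one_div_of_le h1
  have : Real.sqrt c ≤ Real.sqrt u := Real.sqrt_le_sqrt hcu
  nlinarith

lemma thcpb_hasDeriv_int (m : ℝ) (Γ : ℝ → ℝ) (hm : 0 < m) (hΓc : Continuous Γ)
    (hΓnn : ∀ s ∈ Icc (-m) (0:ℝ), 0 ≤ Γ s) {l : ℝ} (hl : 0 < l) :
    HasDerivAt (fun x => ∫ s in (-m)..(0:ℝ), 1 / Real.sqrt (x + 2 * Γ s))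
      (∫ s in (-m)..(0:ℝ), -(1 / (2 * ((l + 2 * Γ s) * Real.sqrt (l + 2 * Γ s))))) l := by
  have hIoc : Ι (-m) (0:ℝ) = Ioc (-m) 0 := uIoc_of_le (by linarith)
  have hmem : ∀ t ∈ Ι (-m) (0:ℝ), 0 ≤ Γ t := by
    intro t ht; rw [hIoc] at ht; exact hΓnn t (Ioc_subset_Icc_self ht)
  have hhalf : 0 < l / 2 := by linarith
  have hmeas : ∀ x : ℝ, AEStronglyMeasurable (fun t => 1 / Real.sqrt (x + 2 * Γ t))
      (volume.restrict (Ι (-m) (0:ℝ))) := by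
    intro x
    simp only [one_div]
    exact ((Real.continuous_sqrt.comp
      (continuous_const.add (continuous_const.mul hΓc))).measurable.inv).aestronglyMeasurable
  have hmeas' : AEStronglyMeasurable
      (fun t => -(1 / (2 * ((l + 2 * Γ t) * Real.sqrt (l + 2 * Γ t)))))
      (volume.restrict (Ι (-m) (0:ℝ))) := by
    simp only [one_div]
    exact (((continuous_const.mul ((continuous_const.add (continuous_const.mul hΓc)).mul
      (Real.continuous_sqrt.comp
        (continuous_const.add (continuous_const.mul hΓc))))).measurable.inv).neg).aestronglyMeasurable
  have main := intervalIntegral.hasDerivAt_integral_of_dominated_loc_of_deriv_le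
    (F := fun x s => 1 / Real.sqrt (x + 2 * Γ s))
    (F' := fun x s => -(1 / (2 * ((x + 2 * Γ s) * Real.sqrt (x + 2 * Γ s)))))
    (x₀ := l) (a := -m) (b := 0) (μ := volume)
    (bound := fun _ => 1 / (2 * ((l / 2) * Real.sqrt (l / 2)))) (Metric.ball_mem_nhds l hhalf)
    (Filter.Eventually.of_forall hmeas)
    (thcpb_integrable m Γ hm hΓc hΓnn hl) hmeas' ?_ intervalIntegrable_const ?_
  · exact main.2
  · -- bound
    apply Filter.Eventually.of_forall
    intro t ht x hx
    have hΓt := hmem t ht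
    rw [Metric.mem_ball, Real.dist_eq, abs_sub_lt_iff] at hx
    have hux : l / 2 < x + 2 * Γ t := by linarith
    have hsx : 0 < Real.sqrt (x + 2 * Γ t) := Real.sqrt_pos.mpr (lt_trans hhalf hux)
    have hpos : 0 < 2 * ((x + 2 * Γ t) * Real.sqrt (x + 2 * Γ t)) :=
      mul_pos two_pos (mul_pos (lt_trans hhalf hux) hsx)
    rw [norm_neg, Real.norm_of_nonneg (one_div_pos.mpr hpos).le]
    exact thcpb_denom_mono hhalf hux.le
  · -- differentiability
    apply Filter.Eventually.of_forall
    intro t ht x hx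
    have hΓt := hmem t ht
    rw [Metric.mem_ball, Real.dist_eq, abs_sub_lt_iff] at hx
    have hux : 0 < x + 2 * Γ t := by linarith
    have hu : HasDerivAt (fun y => y + 2 * Γ t) 1 x := (hasDerivAt_id x).add_const _
    simpa using thcpb_hasDerivAt_invSqrt hu hux

lemma thcpb_ftc (g m γ₀ : ℝ) (hg : 0 < g) (hm : 0 < m) (hγ₀ : γ₀ < 0) :
    ∫ s in (-m)..(0:ℝ),
        1 / (2 * ((g^2/γ₀^2 + 2 * (γ₀ * s)) * Real.sqrt (g^2/γ₀^2 + 2 * (γ₀ * s))))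
      < 1 / (2 * g) := by
  have hγ : γ₀ ≠ 0 := hγ₀.ne
  have hL : 0 < g^2/γ₀^2 := by positivity
  have hvpos : ∀ s ∈ Icc (-m) (0:ℝ), 0 < g^2/γ₀^2 + 2 * (γ₀ * s) := by
    intro s hs
    have : 0 ≤ γ₀ * s := by nlinarith [hs.2]
    linarith
  have hFderiv : ∀ s ∈ uIcc (-m) (0:ℝ),
      HasDerivAt (fun y => -(1/(2*γ₀)) * (1 / Real.sqrt (g^2/γ₀^2 + 2 * (γ₀ * y))))
        (1 / (2 * ((g^2/γ₀^2 + 2 * (γ₀ * s)) * Real.sqrt (g^2/γ₀^2 + 2 * (γ₀ * s))))) s := by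
    intro s hs
    rw [uIcc_of_le (by linarith)] at hs
    have hvs := hvpos s hs
    have hv : HasDerivAt (fun y => g^2/γ₀^2 + 2 * (γ₀ * y)) (2*γ₀) s := by
      simpa using (((hasDerivAt_id s).const_mul γ₀).const_mul 2).const_add (g^2/γ₀^2)
    have h1 := (thcpb_hasDerivAt_invSqrt hv hvs).const_mul (-(1/(2*γ₀)))
    refine h1.congr_deriv ?_
    have hss : Real.sqrt (g^2/γ₀^2 + 2 * (γ₀ * s)) ≠ 0 := by positivity
    field_simp
  have hint : IntervalIntegrable
      (fun s => 1 / (2 * ((g^2/γ₀^2 + 2 * (γ₀ * s)) * Real.sqrt (g^2/γ₀^2 + 2 * (γ₀ * s)))))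
      volume (-m) 0 :=
    thcpb_integrableF' m (fun s => γ₀ * s) hm (by fun_prop)
      (fun s hs => by show (0:ℝ) ≤ γ₀ * s; nlinarith [hs.2]) hL
  have heq := intervalIntegral.integral_eq_sub_of_hasDerivAt hFderiv hint
  rw [heq]
  have hsqrt : Real.sqrt (g^2/γ₀^2) = g / (-γ₀) := by
    rw [show g^2/γ₀^2 = (g/(-γ₀))^2 by rw [div_pow]; rw [neg_pow]; ring_nf]
    exact Real.sqrt_sq (div_nonneg hg.le (by linarith))
  have hF0 : -(1/(2*γ₀)) * (1 / Real.sqrt (g^2/γ₀^2 + 2 * (γ₀ * (0:ℝ)))) = 1/(2*g) := by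
    rw [show g^2/γ₀^2 + 2 * (γ₀ * (0:ℝ)) = g^2/γ₀^2 by ring, hsqrt]
    field_simp
  have hFm : 0 < -(1/(2*γ₀)) * (1 / Real.sqrt (g^2/γ₀^2 + 2 * (γ₀ * (-m)))) := by
    have h1 : 0 < g^2/γ₀^2 + 2 * (γ₀ * (-m)) := hvpos (-m) ⟨le_refl _, by linarith⟩
    have h2 : 0 < Real.sqrt (g^2/γ₀^2 + 2 * (γ₀ * (-m))) := Real.sqrt_pos.mpr h1
    have h3 : 0 < -(1/(2*γ₀)) := by
      rw [neg_pos]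
      exact one_div_neg.mpr (by linarith)
    exact mul_pos h3 (one_div_pos.mpr h2)
  rw [hF0]
  linarith

/-- **The total head of trivial flows near the critical point.**  Let `g > 0`, `m > 0`,
`γ₀ < 0`, and let `Γ` be a `C²` convex function on `[-m, 0]` with `Γ 0 = 0` and
`Γ' 0 = γ₀` (the antiderivative of the vorticity function).  Then `Γ ≥ 0` on `[-m, 0]`;
the total head `Q̃(λ) = λ/2 + g ∫_{-m}^0 (λ + 2Γ(s))^{-1/2} ds` is well defined (the
integrand is interval integrable) and strictly convex on `(0, ∞)`; `Q̃'(g²/γ₀²) > 0`;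
and consequently every critical point `λcr ∈ (0, ∞)` of `Q̃` satisfies
`γ₀² · λcr < g²`. -/
theorem total_head_critical_point_bound
    (g m γ₀ : ℝ) (Γ : ℝ → ℝ)
    (hg : 0 < g) (hm : 0 < m) (hγ₀ : γ₀ < 0)
    (hΓ : ContDiff ℝ 2 Γ)
    (hconv : ∀ s ∈ Icc (-m) (0:ℝ), 0 ≤ deriv (deriv Γ) s)
    (hΓ0 : Γ 0 = 0) (hΓ'0 : deriv Γ 0 = γ₀) :
    (∀ s ∈ Icc (-m) (0:ℝ), 0 ≤ Γ s) ∧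
    (∀ l : ℝ, 0 < l →
      IntervalIntegrable (fun s => 1 / Real.sqrt (l + 2 * Γ s))
        MeasureTheory.volume (-m) 0) ∧
    StrictConvexOn ℝ (Ioi (0:ℝ))
      (fun l => l / 2 + g * ∫ s in (-m)..(0:ℝ), 1 / Real.sqrt (l + 2 * Γ s)) ∧
    (0 < deriv (fun l => l / 2 + g * ∫ s in (-m)..(0:ℝ), 1 / Real.sqrt (l + 2 * Γ s))
      (g ^ 2 / γ₀ ^ 2)) ∧
    (∀ lcr : ℝ, 0 < lcr →
      deriv (fun l => l / 2 + g * ∫ s in (-m)..(0:ℝ), 1 / Real.sqrt (l + 2 * Γ s)) lcr = 0 →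
      γ₀ ^ 2 * lcr < g ^ 2) := by
  have hΓc : Continuous Γ := hΓ.continuous
  have hlb := thcpb_gamma_lb m γ₀ Γ hm hγ₀ hΓ hconv hΓ0 hΓ'0
  have hnn : ∀ s ∈ Icc (-m) (0:ℝ), 0 ≤ Γ s := by
    intro s hs
    have h1 := hlb s hs
    have h2 : 0 ≤ γ₀ * s := by nlinarith [hs.2]
    linarith
  set Q : ℝ → ℝ := fun l => l / 2 + g * ∫ s in (-m)..(0:ℝ), 1 / Real.sqrt (l + 2 * Γ s)
    with hQdef
  have hQd : ∀ l : ℝ, 0 < l → HasDerivAt Q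
      (1/2 + g * ∫ s in (-m)..(0:ℝ),
        -(1 / (2 * ((l + 2 * Γ s) * Real.sqrt (l + 2 * Γ s))))) l := by
    intro l hl
    exact ((hasDerivAt_id l).div_const 2).add
      ((thcpb_hasDeriv_int m Γ hm hΓc hnn hl).const_mul g)
  have hderiv : ∀ l : ℝ, 0 < l → deriv Q l = 1/2 + g * ∫ s in (-m)..(0:ℝ),
      -(1 / (2 * ((l + 2 * Γ s) * Real.sqrt (l + 2 * Γ s)))) :=
    fun l hl => (hQd l hl).deriv
  have hsm : StrictMonoOn (deriv Q) (Ioi (0:ℝ)) := by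
    intro a ha b hb hab
    rw [mem_Ioi] at ha hb
    rw [hderiv a ha, hderiv b hb]
    have hIa : IntervalIntegrable
        (fun s => -(1 / (2 * ((a + 2 * Γ s) * Real.sqrt (a + 2 * Γ s))))) volume (-m) 0 :=
      (thcpb_integrableF' m Γ hm hΓc hnn ha).neg
    have hIb : IntervalIntegrable
        (fun s => -(1 / (2 * ((b + 2 * Γ s) * Real.sqrt (b + 2 * Γ s))))) volume (-m) 0 :=
      (thcpb_integrableF' m Γ hm hΓc hnn hb).neg
    have key : (∫ s in (-m)..(0:ℝ), -(1 / (2 * ((a + 2 * Γ s) * Real.sqrt (a + 2 * Γ s)))))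
        < ∫ s in (-m)..(0:ℝ), -(1 / (2 * ((b + 2 * Γ s) * Real.sqrt (b + 2 * Γ s)))) := by
      rw [← sub_pos, ← intervalIntegral.integral_sub hIb hIa]
      apply intervalIntegral.intervalIntegral_pos_of_pos_on (hIb.sub hIa) _ (by linarith)
      intro x hx
      have hΓx := hnn x (Ioo_subset_Icc_self hx)
      have h1 : 0 < a + 2 * Γ x := by linarith
      have h2 : a + 2 * Γ x < b + 2 * Γ x := by linarith
      have hsa : 0 < Real.sqrt (a + 2 * Γ x) := Real.sqrt_pos.mpr h1
      have hsb : 0 < Real.sqrt (b + 2 * Γ x) := Real.sqrt_pos.mpr (by linarith)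
      have hss : Real.sqrt (a + 2 * Γ x) < Real.sqrt (b + 2 * Γ x) :=
        Real.sqrt_lt_sqrt h1.le h2
      have hlt : (a + 2 * Γ x) * Real.sqrt (a + 2 * Γ x)
          < (b + 2 * Γ x) * Real.sqrt (b + 2 * Γ x) := by nlinarith
      have hfin := one_div_lt_one_div_of_lt
        (mul_pos two_pos (mul_pos h1 hsa))
        (by linarith : 2 * ((a + 2 * Γ x) * Real.sqrt (a + 2 * Γ x))
          < 2 * ((b + 2 * Γ x) * Real.sqrt (b + 2 * Γ x)))
      linarith
    have := mul_lt_mul_of_pos_left key hg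
    linarith
  have hQc : ContinuousOn Q (Ioi 0) := fun l hl =>
    ((hQd l (mem_Ioi.mp hl)).continuousAt).continuousWithinAt
  have hconvx : StrictConvexOn ℝ (Ioi (0:ℝ)) Q :=
    StrictMonoOn.strictConvexOn_of_deriv (convex_Ioi 0) hQc (by rwa [interior_Ioi])
  have hL : 0 < g ^ 2 / γ₀ ^ 2 := div_pos (by positivity) (by nlinarith)
  have hdL : 0 < deriv Q (g ^ 2 / γ₀ ^ 2) := by
    rw [hderiv _ hL]
    have hcomp : (∫ s in (-m)..(0:ℝ),
          1 / (2 * ((g ^ 2 / γ₀ ^ 2 + 2 * Γ s) * Real.sqrt (g ^ 2 / γ₀ ^ 2 + 2 * Γ s))))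
        ≤ ∫ s in (-m)..(0:ℝ),
          1 / (2 * ((g ^ 2 / γ₀ ^ 2 + 2 * (γ₀ * s)) * Real.sqrt (g ^ 2 / γ₀ ^ 2 + 2 * (γ₀ * s)))) := by
      apply intervalIntegral.integral_mono_on (by linarith)
        (thcpb_integrableF' m Γ hm hΓc hnn hL)
        (thcpb_integrableF' m (fun s => γ₀ * s) hm (by fun_prop)
          (fun s hs => by show (0:ℝ) ≤ γ₀ * s; nlinarith [hs.2]) hL)
      intro x hx
      have hγx : 0 ≤ γ₀ * x := by nlinarith [hx.2]
      have hlbx := hlb x hx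
      exact thcpb_denom_mono (by linarith) (by linarith)
    have hftc := thcpb_ftc g m γ₀ hg hm hγ₀
    rw [intervalIntegral.integral_neg, mul_neg]
    have h3 := lt_of_le_of_lt hcomp hftc
    have h4 := mul_lt_mul_of_pos_left h3 hg
    have h5 : g * (1 / (2 * g)) = 1 / 2 := by field_simp
    linarith
  refine ⟨hnn, fun l hl => thcpb_integrable m Γ hm hΓc hnn hl, hconvx, hdL, ?_⟩
  intro lcr hlcr hcrit
  by_contra hcon
  push_neg at hcon
  have hle : g ^ 2 / γ₀ ^ 2 ≤ lcr := by
    have hγ2 : 0 < γ₀ ^ 2 := by nlinarith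
    rw [div_le_iff₀ hγ2]
    nlinarith
  rcases eq_or_lt_of_le hle with heq | hlt
  · rw [heq, hcrit] at hdL
    exact lt_irrefl 0 hdL
  · have := hsm (mem_Ioi.mpr hL) (mem_Ioi.mpr hlcr) hlt
    rw [hcrit] at this
    linarith
end
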